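/- arXiv:2309.03735 — 9 statements merged into one kernel-verified Lean document; each statement's English description precedes it below -/
import Mathlib

section
/- For any r-uniform hypergraph H and integers r, s: C_s(C_r(C_s(H))) = C_s(H), where C_k(H) denotes the set of covers of H of size exactly k. -/
open Finset

variable {V : Type*} [DecidableEq V]

/-- The vertex set of a hypergraph: the union of its edges. -/
def vertsH (H : Set (Finset V)) : Set V := ⋃ e ∈ H, (e : Set V)

/-- `c` is a cover of the hypergraph `H`: it meets every edge. -/
def IsCoverH (H : Set (Finset V)) (c : Finset V) : Prop := ∀ e ∈ H, (c ∩ e).Nonempty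

/-- The covering number of `H` equals `k`. -/
def CoverNumIs (H : Set (Finset V)) (k : ℕ) : Prop :=
  (∃ c, IsCoverH H c ∧ c.card = k) ∧ ∀ c, IsCoverH H c → k ≤ c.card

/-- `Ck H k` is the set of covers of `H` of size exactly `k`. -/
def Ck (H : Set (Finset V)) (k : ℕ) : Set (Finset V) := {c | c.card = k ∧ IsCoverH H c}

/-- `H` is `r`-uniform. -/
def UniformH (H : Set (Finset V)) (r : ℕ) : Prop := ∀ e ∈ H, e.card = r

/-- Orthogonality of hypergraphs: every pair of edges meets in exactly one vertex. -/
def OrthH (A B : Set (Finset V)) : Prop := ∀ a ∈ A, ∀ b ∈ B, (a ∩ b).card = 1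

/-- An `(r,s)`-loom. -/
def IsLoom (r s : ℕ) (A B : Set (Finset V)) : Prop :=
  1 ≤ r ∧ 1 ≤ s ∧ OrthH A B ∧ UniformH A r ∧ UniformH B s ∧
    CoverNumIs A s ∧ CoverNumIs B r ∧ A = Ck B r ∧ B = Ck A s

/-- for an `r`-uniform hypergraph `H`,
`C_s(C_r(C_s(H))) = C_s(H)`. -/
theorem stmt1 (r s : ℕ) (H : Set (Finset V)) (hH : UniformH H r) :
    Ck (Ck (Ck H s) r) s = Ck H s := by
  ext c
  constructor
  · rintro ⟨hcard, hcov⟩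
    refine ⟨hcard, fun e he => ?_⟩
    exact hcov e ⟨hH e he, fun b hb => by
      rw [Finset.inter_comm]; exact hb.2 e he⟩
  · rintro ⟨hcard, hcov⟩
    refine ⟨hcard, fun a ha => ?_⟩
    rw [Finset.inter_comm]
    exact ha.2 c ⟨hcard, hcov⟩
end

section
/- If (A,B) is an (r,r)-loom with r > 1, then every edge of A has an edge of A disjoint from it; in particular ν(A) ≥ 2. -/
open Finset

variable {V : Type*} [DecidableEq V]

/-- `M` is a matching of `H`: a set of pairwise disjoint edges of `H`. -/
def IsMatchingH (H : Set (Finset V)) (M : Finset (Finset V)) : Prop :=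
  ↑M ⊆ H ∧ (M : Set (Finset V)).Pairwise (fun e f => Disjoint e f)

/-- The matching number of `H` equals `n`. -/
def MatchNumIs (H : Set (Finset V)) (n : ℕ) : Prop :=
  (∃ M, IsMatchingH H M ∧ M.card = n) ∧ ∀ M, IsMatchingH H M → M.card ≤ n

/-- in an `(r,r)`-loom with `r > 1`, every edge of `A` has an edge
of `A` disjoint from it; in particular `ν(A) ≥ 2`. -/
theorem stmt3 (r : ℕ) (hr : 1 < r) (A B : Set (Finset V)) (hL : IsLoom r r A B) :
    (∀ e ∈ A, ∃ f ∈ A, Disjoint e f) ∧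
      (∃ M : Finset (Finset V), IsMatchingH A M ∧ 2 ≤ M.card) := by
  obtain ⟨hr1, hs1, horth, hA, hB, hcnA, ⟨⟨cB, hcB, hcBcard⟩, hBmin⟩, hACk, hBCk⟩ := hL
  have hmain : ∀ e ∈ A, ∃ f ∈ A, Disjoint e f := by
    intro e he
    by_contra h
    push_neg at h
    have hcov : IsCoverH A e := by
      intro f hf
      have := h f hf
      rwa [Finset.not_disjoint_iff_nonempty_inter] at this
    have heB : e ∈ B := by
      rw [hBCk]; exact ⟨hA e he, hcov⟩
    have h1 := horth e he e heB
    rw [Finset.inter_self, hA e he] at h1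
    omega
  refine ⟨hmain, ?_⟩
  have heA : cB ∈ A := by rw [hACk]; exact ⟨hcBcard, hcB⟩
  obtain ⟨f, hf, hdisj⟩ := hmain cB heA
  have hne : cB ≠ f := by
    intro hEq
    rw [hEq, Finset.disjoint_self_iff_empty] at hdisj
    have : f.card = r := hA f hf
    rw [hdisj, Finset.card_empty] at this
    omega
  refine ⟨{cB, f}, ⟨?_, ?_⟩, ?_⟩
  · intro x hx
    simp only [Finset.coe_insert, Finset.coe_singleton, Set.mem_insert_iff,
      Set.mem_singleton_iff] at hx
    rcases hx with h1 | h1 <;> subst h1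
    · exact heA
    · exact hf
  · intro x hx y hy hxy
    simp only [Finset.coe_insert, Finset.coe_singleton, Set.mem_insert_iff,
      Set.mem_singleton_iff] at hx hy
    rcases hx with h1 | h1 <;> rcases hy with h2 | h2 <;> subst h1 <;> subst h2
    · exact absurd rfl hxy
    · exact hdisj
    · exact hdisj.symm
    · exact absurd rfl hxy
  · rw [Finset.card_insert_of_notMem (by simpa using hne), Finset.card_singleton]
end

section
/- Let (A,B) be an (r,r)-loom and x, y vertices. If every edge of A containing x also contains y, then the edges of A containing x are exactly the edges of A containing y. -/
open Finset

variable {V : Type*} [DecidableEq V]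

/-- in an `(r,r)`-loom, if `star_A(x) ⊆ star_A(y)` then
`star_A(x) = star_A(y)`. -/
theorem stmt4 (r : ℕ) (A B : Set (Finset V)) (hL : IsLoom r r A B)
    (x y : V) (hx : x ∈ vertsH A) (hy : y ∈ vertsH A)
    (hsub : ∀ e ∈ A, x ∈ e → y ∈ e) :
    {e | e ∈ A ∧ x ∈ e} = {e | e ∈ A ∧ y ∈ e} := by
  obtain ⟨hr, -, horth, hunifA, hunifB, hcovA, hcovB, hAB, hBA⟩ := hL
  ext e
  simp only [Set.mem_setOf_eq]
  constructor
  · rintro ⟨heA, hxe⟩; exact ⟨heA, hsub e heA hxe⟩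
  · rintro ⟨heA, hye⟩
    refine ⟨heA, ?_⟩
    by_contra hxe
    have hxy : x ≠ y := by rintro rfl; exact hxe hye
    obtain ⟨a, haA, hxa⟩ : ∃ a ∈ A, x ∈ a := by
      simpa [vertsH] using hx
    have haCk : a ∈ Ck B r := hAB ▸ haA
    obtain ⟨hacard, hacov⟩ := haCk
    -- there is an edge of B containing x
    obtain ⟨b, hbB, hxb⟩ : ∃ b ∈ B, x ∈ b := by
      by_contra h
      push_neg at h
      have hcov' : IsCoverH B (a.erase x) := by
        intro b hb
        obtain ⟨v, hv⟩ := hacov b hb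
        rw [mem_inter] at hv
        exact ⟨v, mem_inter.2 ⟨mem_erase.2 ⟨fun h' => h b hb (h' ▸ hv.2), hv.1⟩, hv.2⟩⟩
      have h1 := hcovB.2 _ hcov'
      have h2 : (a.erase x).card = a.card - 1 := card_erase_of_mem hxa
      omega
    have hbcard : b.card = r := hunifB b hbB
    -- y ∉ b
    have hyb : y ∉ b := by
      intro hyb
      have hcov' : IsCoverH A (b.erase x) := by
        intro f hf
        obtain ⟨v, hv⟩ := (hBA ▸ hbB : b ∈ Ck A r).2 f hf
        rw [mem_inter] at hv
        by_cases hvx : v = x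
        · subst hvx
          exact ⟨y, mem_inter.2 ⟨mem_erase.2 ⟨Ne.symm hxy, hyb⟩, hsub f hf hv.2⟩⟩
        · exact ⟨v, mem_inter.2 ⟨mem_erase.2 ⟨hvx, hv.1⟩, hv.2⟩⟩
      have h1 := hcovA.2 _ hcov'
      have h2 : (b.erase x).card = b.card - 1 := card_erase_of_mem hxb
      omega
    -- b' = insert y (b.erase x) is in B
    set b' : Finset V := insert y (b.erase x) with hb'
    have hb'card : b'.card = r := by
      rw [hb', card_insert_of_notMem (fun h => hyb (mem_of_mem_erase h)),
        card_erase_of_mem hxb, hbcard]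
      omega
    have hb'cov : IsCoverH A b' := by
      intro f hf
      obtain ⟨v, hv⟩ := (hBA ▸ hbB : b ∈ Ck A r).2 f hf
      rw [mem_inter] at hv
      by_cases hvx : v = x
      · subst hvx
        exact ⟨y, mem_inter.2 ⟨mem_insert_self _ _, hsub f hf hv.2⟩⟩
      · exact ⟨v, mem_inter.2 ⟨mem_insert_of_mem (mem_erase.2 ⟨hvx, hv.1⟩), hv.2⟩⟩
    have hb'B : b' ∈ B := hBA ▸ (⟨hb'card, hb'cov⟩ : b' ∈ Ck A r)
    -- derive contradiction with orthogonality
    have h1 : (e ∩ b').card = 1 := horth e heA b' hb'B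
    have h2 : (e ∩ b).card = 1 := horth e heA b hbB
    obtain ⟨v, hv⟩ := card_pos.1 (by omega : 0 < (e ∩ b).card)
    rw [mem_inter] at hv
    have hvx : v ≠ x := fun h => hxe (h ▸ hv.1)
    have hvb' : v ∈ e ∩ b' := mem_inter.2 ⟨hv.1, mem_insert_of_mem (mem_erase.2 ⟨hvx, hv.2⟩)⟩
    have hyb' : y ∈ e ∩ b' := mem_inter.2 ⟨hye, mem_insert_self _ _⟩
    obtain ⟨w, hw⟩ := card_eq_one.1 h1
    rw [hw, mem_singleton] at hvb' hyb'
    exact hyb (hyb' ▸ hvb' ▸ hv.2)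
end

section
/- Let H1, …, Hm be pairwise cross-intersecting r-uniform hypergraphs with r ≥ 2. If m > r + 1, then τ*(H_i) < r for some i. -/
open Finset

variable {V : Type*} [DecidableEq V]

/-- Cross-intersecting pair of hypergraphs. -/
def CrossInt (A B : Set (Finset V)) : Prop := ∀ a ∈ A, ∀ b ∈ B, (a ∩ b).Nonempty
variable [Fintype V]

/-- A fractional matching of `H`. -/
def IsFracMatching (H : Set (Finset V)) (f : Finset V → ℝ) : Prop :=
  (∀ e, 0 ≤ f e) ∧ (∀ e, e ∉ H → f e = 0) ∧
    ∀ v : V, ∑ e ∈ Finset.univ.filter (fun e : Finset V => v ∈ e), f e ≤ 1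

/-- The fractional matching number of `H` equals `x`. -/
def FracMatchNumIs (H : Set (Finset V)) (x : ℝ) : Prop :=
  (∃ f, IsFracMatching H f ∧ ∑ e : Finset V, f e = x) ∧
    ∀ f, IsFracMatching H f → ∑ e : Finset V, f e ≤ x

/-- A fractional cover of `H`. -/
def IsFracCover (H : Set (Finset V)) (g : V → ℝ) : Prop :=
  (∀ v, 0 ≤ g v) ∧ ∀ e ∈ H, 1 ≤ ∑ v ∈ e, g v

/-- The fractional covering number of `H` equals `x`. -/
def FracCoverNumIs (H : Set (Finset V)) (x : ℝ) : Prop :=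
  (∃ g, IsFracCover H g ∧ ∑ v : V, g v = x) ∧
    ∀ g, IsFracCover H g → x ≤ ∑ v : V, g v

/-- A perfect fractional matching of `H`: saturated at every vertex of `H`. -/
def IsPerfectFracMatching (H : Set (Finset V)) (f : Finset V → ℝ) : Prop :=
  IsFracMatching H f ∧
    ∀ v ∈ vertsH H, ∑ e ∈ Finset.univ.filter (fun e : Finset V => v ∈ e), f e = 1

lemma card_le_of_disjoint_meets {ι : Type*} (s : Finset ι) (c : ι → Finset V) (f : Finset V)
    (hdisj : ∀ j ∈ s, ∀ k ∈ s, j ≠ k → Disjoint (c j) (c k))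
    (hne : ∀ j ∈ s, (f ∩ c j).Nonempty) : s.card ≤ f.card := by
  classical
  have h1 : s.card ≤ (s.biUnion fun j => f ∩ c j).card := by
    rw [Finset.card_biUnion (fun j hj k hk hjk =>
      ((hdisj j hj k hk hjk).mono inter_subset_right inter_subset_right))]
    calc s.card = ∑ _j ∈ s, 1 := by simp
      _ ≤ ∑ j ∈ s, (f ∩ c j).card := Finset.sum_le_sum fun j hj => (hne j hj).card_pos
  exact h1.trans (Finset.card_le_card (Finset.biUnion_subset.mpr fun j _ => inter_subset_left))

lemma slack {G : Set (Finset V)} {r : ℝ}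
    (hmin : ∀ g : V → ℝ, IsFracCover G g → r ≤ ∑ v, g v)
    {g : V → ℝ} (hg : IsFracCover G g) (hsum : ∑ v, g v = r)
    {u : V} (hu : 0 < g u) :
    ∃ f ∈ G, u ∈ f ∧ ∑ v ∈ f, g v = 1 := by
  classical
  by_contra hcon
  push_neg at hcon
  set T : Finset (Finset V) := univ.filter (fun f => f ∈ G ∧ u ∈ f) with hT
  have hkey : ∀ f ∈ T, 1 < ∑ v ∈ f, g v := by
    intro f hf
    simp only [hT, mem_filter, mem_univ, true_and] at hf
    exact lt_of_le_of_ne (hg.2 f hf.1) (Ne.symm (hcon f hf.1 hf.2))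
  set ε : ℝ := if h : T.Nonempty then min (g u) (T.inf' h (fun f => ∑ v ∈ f, g v - 1)) else g u
    with hε
  have hε0 : 0 < ε := by
    rw [hε]
    split
    · rename_i h
      refine lt_min hu ?_
      rw [Finset.lt_inf'_iff]
      intro f hf; linarith [hkey f hf]
    · exact hu
  have hεu : ε ≤ g u := by
    rw [hε]; split
    · exact min_le_left _ _
    · exact le_rfl
  have hεf : ∀ f ∈ T, ε ≤ ∑ v ∈ f, g v - 1 := by
    intro f hf
    rw [hε]
    rw [dif_pos ⟨f, hf⟩]
    exact le_trans (min_le_right _ _) (Finset.inf'_le _ hf)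
  set g' : V → ℝ := fun v => if v = u then g v - ε else g v with hg'
  have hsub : ∀ f : Finset V, ∑ v ∈ f, g' v = ∑ v ∈ f, g v - (if u ∈ f then ε else 0) := by
    intro f
    have : ∀ v ∈ f, g' v = g v - (if v = u then ε else 0) := by
      intro v _; rw [hg']; by_cases h : v = u <;> simp [h]
    rw [Finset.sum_congr rfl this, Finset.sum_sub_distrib, Finset.sum_ite_eq' f u (fun _ => ε)]
  have hcov : IsFracCover G g' := by
    constructor
    · intro v
      show (0:ℝ) ≤ if v = u then g v - ε else g v
      by_cases h : v = u
      · rw [if_pos h, h]; linarith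
      · rw [if_neg h]; exact hg.1 v
    · intro e he
      rw [hsub e]
      by_cases h : u ∈ e
      · rw [if_pos h]
        have : e ∈ T := by simp [hT, he, h]
        linarith [hεf e this]
      · rw [if_neg h]; linarith [hg.2 e he]
  have := hmin g' hcov
  rw [hsub univ, if_pos (mem_univ u), hsum] at this
  linarith


/-- pairwise cross-intersecting `r`-uniform hypergraphs (`r ≥ 2`),
more than `r + 1` of them: some `H i` has `τ*(H i) < r`. -/
theorem stmt8 (r m : ℕ) (hr : 2 ≤ r) (hm : r + 1 < m)
    (H : Fin m → Set (Finset V))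
    (hu : ∀ i, UniformH (H i) r)
    (hx : ∀ i j, i ≠ j → CrossInt (H i) (H j)) :
    ∃ i, ∃ g : V → ℝ, IsFracCover (H i) g ∧ ∑ v : V, g v < (r : ℝ) := by
  classical
  by_contra hcon
  push_neg at hcon
  have hm0 : 0 < m := by omega
  set H' : ℕ → Set (Finset V) := fun j => H ⟨j % m, Nat.mod_lt j hm0⟩ with hH'
  have hC' : ∀ j, ∀ g : V → ℝ, IsFracCover (H' j) g → (r:ℝ) ≤ ∑ v, g v := by
    intro j g hg
    exact hcon _ g hg
  have hu' : ∀ j, UniformH (H' j) r := fun j => hu _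
  have hx' : ∀ j l, j < m → l < m → j ≠ l → CrossInt (H' j) (H' l) := by
    intro j l hj hl hjl
    apply hx
    simp only [Fin.ne_iff_vne, Nat.mod_eq_of_lt hj, Nat.mod_eq_of_lt hl]
    exact hjl
  have hrR : (2:ℝ) ≤ (r:ℝ) := by exact_mod_cast hr
  have hne : ∀ j, (H' j).Nonempty := by
    intro j
    by_contra hemp
    rw [Set.not_nonempty_iff_eq_empty] at hemp
    have h0 : IsFracCover (H' j) (fun _ => (0:ℝ)) := by
      constructor
      · intro v; exact le_refl 0
      · intro e he; rw [hemp] at he; exact absurd he (Set.notMem_empty e)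
    have := hC' j _ h0
    simp only [Finset.sum_const_zero] at this
    linarith
  obtain ⟨b0, hb0⟩ := hne 0
  have hb0card : b0.card = r := hu' 0 b0 hb0
  have hb0ne : b0.Nonempty := by rw [← Finset.card_pos, hb0card]; omega
  obtain ⟨p, hp⟩ := hb0ne
  -- the main inductive construction
  have main : ∀ n, n ≤ m → ∃ b : ℕ → Finset V,
      ∀ j, j < n → b j ∈ H' j ∧ p ∈ b j ∧ ∀ l, l < j → b j ∩ b l = {p} := by
    intro n
    induction n with
    | zero => exact fun _ => ⟨fun _ => b0, fun j hj => absurd hj (by omega)⟩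
    | succ n ih =>
      intro hn1
      obtain ⟨b, hb⟩ := ih (by omega)
      rcases Nat.eq_zero_or_pos n with hn0 | hnpos
      · subst hn0
        refine ⟨fun _ => b0, ?_⟩
        intro j hj
        have : j = 0 := by omega
        subst this
        exact ⟨hb0, hp, fun l hl => absurd hl (by omega)⟩
      · -- disjointness of the erased previous edges
        have hdisj : ∀ j ∈ Finset.range n, ∀ k ∈ Finset.range n, j ≠ k →
            Disjoint ((b j).erase p) ((b k).erase p) := by
          intro j hj k hk hjk
          simp only [Finset.mem_range] at hj hk
          rw [Finset.disjoint_left]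
          intro v hvj hvk
          rcases Finset.mem_erase.mp hvj with ⟨hvp, hvbj⟩
          rcases Finset.mem_erase.mp hvk with ⟨_, hvbk⟩
          rcases lt_or_gt_of_ne hjk with h | h
          · have hsing := (hb k hk).2.2 j h
            have : v ∈ ({p} : Finset V) := by
              rw [← hsing]; exact Finset.mem_inter.mpr ⟨hvbk, hvbj⟩
            exact hvp (Finset.mem_singleton.mp this)
          · have hsing := (hb j hj).2.2 k h
            have : v ∈ ({p} : Finset V) := by
              rw [← hsing]; exact Finset.mem_inter.mpr ⟨hvbj, hvbk⟩
            exact hvp (Finset.mem_singleton.mp this)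
        set U : Finset V := (Finset.range n).biUnion (fun l => (b l).erase p) with hU
        have hpU : p ∉ U := by
          simp only [hU, Finset.mem_biUnion]
          rintro ⟨l, -, hmem⟩
          exact (Finset.mem_erase.mp hmem).1 rfl
        have hUcard : U.card = n * (r - 1) := by
          rw [hU, Finset.card_biUnion hdisj]
          have heq : ∀ l ∈ Finset.range n, ((b l).erase p).card = r - 1 := by
            intro l hl
            rw [Finset.card_erase_of_mem (hb l (Finset.mem_range.mp hl)).2.1,
              hu' l _ (hb l (Finset.mem_range.mp hl)).1]
          rw [Finset.sum_congr rfl heq, Finset.sum_const, Finset.card_range, smul_eq_mul]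
        have hnR : (0:ℝ) < (n:ℝ) := by exact_mod_cast hnpos
        set g : V → ℝ := fun v => (if v = p then 1 else 0) + (if v ∈ U then 1/(n:ℝ) else 0)
          with hg
        have hgsum : ∀ f : Finset V, ∑ v ∈ f, g v =
            (if p ∈ f then 1 else 0) + ((f ∩ U).card : ℝ) * (1/(n:ℝ)) := by
          intro f
          rw [hg, Finset.sum_add_distrib, Finset.sum_ite_eq' f p (fun _ => (1:ℝ))]
          congr 1
          rw [Finset.sum_ite_mem, Finset.sum_const, nsmul_eq_mul]
        have hgnn : ∀ v, 0 ≤ g v := by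
          intro v
          rw [hg]
          apply add_nonneg
          · split <;> norm_num
          · split
            · exact le_of_lt (one_div_pos.mpr hnR)
            · exact le_refl 0
        have hmeet : ∀ e ∈ H' n, p ∉ e → n ≤ (e ∩ U).card := by
          intro e he hpe
          have := card_le_of_disjoint_meets (Finset.range n) (fun l => (b l).erase p)
            (e ∩ U) hdisj ?_
          · simpa using this
          · intro l hl
            have hln : l < n := Finset.mem_range.mp hl
            obtain ⟨v, hv⟩ := hx' n l (by omega) (by omega) (by omega) e he (b l) (hb l hln).1
            rcases Finset.mem_inter.mp hv with ⟨hve, hvb⟩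
            have hvp : v ≠ p := fun h => hpe (h ▸ hve)
            have hvU : v ∈ U := by
              rw [hU]
              exact Finset.mem_biUnion.mpr ⟨l, hl, Finset.mem_erase.mpr ⟨hvp, hvb⟩⟩
            exact ⟨v, Finset.mem_inter.mpr ⟨Finset.mem_inter.mpr ⟨hve, hvU⟩,
              Finset.mem_erase.mpr ⟨hvp, hvb⟩⟩⟩
        have hgcov : IsFracCover (H' n) g := by
          refine ⟨hgnn, ?_⟩
          intro e he
          rw [hgsum e]
          by_cases hpe : p ∈ e
          · rw [if_pos hpe]
            have : (0:ℝ) ≤ ((e ∩ U).card : ℝ) * (1/(n:ℝ)) :=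
              mul_nonneg (Nat.cast_nonneg _) (le_of_lt (one_div_pos.mpr hnR))
            linarith
          · rw [if_neg hpe, zero_add]
            have hcard : (n:ℝ) ≤ ((e ∩ U).card : ℝ) := by exact_mod_cast hmeet e he hpe
            rw [mul_one_div, le_div_iff₀ hnR, one_mul]
            linarith
        have hgtot : ∑ v, g v = (r:ℝ) := by
          rw [hgsum Finset.univ, if_pos (Finset.mem_univ p), Finset.univ_inter, hUcard]
          have h1r : (1:ℕ) ≤ r := by omega
          push_cast [h1r]
          field_simp
          ring
        have hgp : 0 < g p := by
          show (0:ℝ) < (if p = p then (1:ℝ) else 0) + (if p ∈ U then 1/(n:ℝ) else 0)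
          rw [if_pos rfl, if_neg hpU]
          norm_num
        obtain ⟨f, hfH, hpf, hftight⟩ := slack (hC' n) hgcov hgtot hgp
        have hcard0 : (f ∩ U).card = 0 := by
          rw [hgsum f, if_pos hpf] at hftight
          have h2 : ((f ∩ U).card : ℝ) * (1/(n:ℝ)) = 0 := by linarith
          rcases mul_eq_zero.mp h2 with h3 | h3
          · exact_mod_cast h3
          · exfalso
            rw [one_div] at h3
            exact (inv_ne_zero (ne_of_gt hnR)) h3
        have hfU : f ∩ U = ∅ := Finset.card_eq_zero.mp hcard0
        refine ⟨Function.update b n f, ?_⟩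
        intro j hj
        rcases Nat.lt_succ_iff_lt_or_eq.mp hj with hj' | rfl
        · rw [Function.update_of_ne (by omega)]
          refine ⟨(hb j hj').1, (hb j hj').2.1, ?_⟩
          intro l hl
          rw [Function.update_of_ne (by omega)]
          exact (hb j hj').2.2 l hl
        · rw [Function.update_self]
          refine ⟨hfH, hpf, ?_⟩
          intro l hl
          rw [Function.update_of_ne (by omega)]
          ext v
          simp only [Finset.mem_inter, Finset.mem_singleton]
          constructor
          · rintro ⟨hvf, hvb⟩
            by_contra hvp
            have hvU : v ∈ U := by
              rw [hU]
              exact Finset.mem_biUnion.mpr ⟨l, Finset.mem_range.mpr hl,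
                Finset.mem_erase.mpr ⟨hvp, hvb⟩⟩
            have : v ∈ f ∩ U := Finset.mem_inter.mpr ⟨hvf, hvU⟩
            rw [hfU] at this
            exact absurd this (Finset.notMem_empty v)
          · rintro rfl
            exact ⟨hpf, (hb l hl).2.1⟩
  obtain ⟨b, hb⟩ := main m le_rfl
  -- every edge of H' 0 contains p
  have hall : ∀ f ∈ H' 0, p ∈ f := by
    intro f hf
    by_contra hpf
    have hdisj : ∀ j ∈ Finset.Ico 1 m, ∀ k ∈ Finset.Ico 1 m, j ≠ k →
        Disjoint ((b j).erase p) ((b k).erase p) := by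
      intro j hj k hk hjk
      rcases Finset.mem_Ico.mp hj with ⟨_, hjm⟩
      rcases Finset.mem_Ico.mp hk with ⟨_, hkm⟩
      rw [Finset.disjoint_left]
      intro v hvj hvk
      rcases Finset.mem_erase.mp hvj with ⟨hvp, hvbj⟩
      rcases Finset.mem_erase.mp hvk with ⟨_, hvbk⟩
      rcases lt_or_gt_of_ne hjk with h | h
      · have hsing := (hb k hkm).2.2 j h
        have : v ∈ ({p} : Finset V) := by
          rw [← hsing]; exact Finset.mem_inter.mpr ⟨hvbk, hvbj⟩
        exact hvp (Finset.mem_singleton.mp this)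
      · have hsing := (hb j hjm).2.2 k h
        have : v ∈ ({p} : Finset V) := by
          rw [← hsing]; exact Finset.mem_inter.mpr ⟨hvbj, hvbk⟩
        exact hvp (Finset.mem_singleton.mp this)
    have hcard : (Finset.Ico 1 m).card ≤ f.card := by
      apply card_le_of_disjoint_meets _ _ _ hdisj
      intro l hl
      rcases Finset.mem_Ico.mp hl with ⟨hl1, hlm⟩
      obtain ⟨v, hv⟩ := hx' 0 l (by omega) (by omega) (by omega) f hf (b l) (hb l hlm).1
      rcases Finset.mem_inter.mp hv with ⟨hvf, hvb⟩
      have hvp : v ≠ p := fun h => hpf (h ▸ hvf)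
      exact ⟨v, Finset.mem_inter.mpr ⟨hvf, Finset.mem_erase.mpr ⟨hvp, hvb⟩⟩⟩
    rw [Nat.card_Ico, hu' 0 f hf] at hcard
    omega
  -- indicator of p is a cheap cover of H' 0
  have hg0 : IsFracCover (H' 0) (fun v => if v = p then (1:ℝ) else 0) := by
    constructor
    · intro v
      show (0:ℝ) ≤ if v = p then 1 else 0
      split <;> norm_num
    · intro e he
      rw [Finset.sum_ite_eq' e p (fun _ => (1:ℝ)), if_pos (hall e he)]
  have := hC' 0 _ hg0
  rw [Finset.sum_ite_eq' Finset.univ p (fun _ => (1:ℝ)), if_pos (Finset.mem_univ p)] at this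
  linarith
end

section
/- If A and B are cross-intersecting hypergraphs, A is r-uniform, B is 2-uniform (a graph), V(A) = V(B), and there exists a set p with |p ∩ e| = 1 for every edge e of A ∪ B, then τ(A ∪ B) ≤ r. -/
open Finset

variable {V : Type*} [DecidableEq V]

omit [DecidableEq V] in
lemma mem_vertsH {H : Set (Finset V)} {e : Finset V} {x : V} (he : e ∈ H) (hx : x ∈ e) :
    x ∈ vertsH H := Set.mem_biUnion he hx

/-- if `A` is `r`-uniform, `B` is `2`-uniform, they are
cross-intersecting, `V(A) = V(B)`, and `A ∪ B` is pinnable, then `τ(A ∪ B) ≤ r`. -/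
theorem stmt10 (r : ℕ) (A B : Set (Finset V))
    (hAu : UniformH A r) (hBu : UniformH B 2) (hx : CrossInt A B)
    (hV : vertsH A = vertsH B)
    (p : Finset V) (hp : (p : Set V) ⊆ vertsH (A ∪ B))
    (hpin : ∀ e ∈ A ∪ B, (p ∩ e).card = 1) :
    ∃ c : Finset V, IsCoverH (A ∪ B) c ∧ c.card ≤ r := by
  by_cases hA : ∃ a, a ∈ A
  · obtain ⟨a, ha⟩ := hA
    have har : a.card = r := hAu a ha
    obtain ⟨v, hv⟩ := card_eq_one.mp (hpin a (Or.inl ha))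
    have hva : v ∈ a := (mem_inter.mp (hv ▸ mem_singleton_self v)).2
    have hvp : v ∈ p := (mem_inter.mp (hv ▸ mem_singleton_self v)).1
    by_cases hD : ∀ a' ∈ A, (a ∩ a').Nonempty
    · refine ⟨a, ?_, har.le⟩
      rintro e (he | he)
      · exact hD e he
      · exact hx a ha e he
    · push_neg at hD
      obtain ⟨a', ha', hdisj⟩ := hD
      have hna' : ∀ x ∈ a, x ∉ a' := by
        intro x hx1 hx2
        have : x ∈ a ∩ a' := mem_inter.mpr ⟨hx1, hx2⟩
        simp [hdisj] at this
      obtain ⟨v', hv'⟩ := card_eq_one.mp (hpin a' (Or.inl ha'))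
      have hva' : v' ∈ a' := (mem_inter.mp (hv' ▸ mem_singleton_self v')).2
      have hvp' : v' ∈ p := (mem_inter.mp (hv' ▸ mem_singleton_self v')).1
      have hvv' : v ≠ v' := fun h => hna' v hva (h ▸ hva')
      -- key claim: any p-vertex of B's vertex set other than v equals v',
      -- and a has a vertex other than v
      have key : ∀ q ∈ p, q ∈ vertsH B → q ≠ v → q = v' ∧ ∃ x ∈ a, x ≠ v := by
        intro q hqp hqB hqv
        obtain ⟨b, hb, hqb⟩ : ∃ b ∈ B, q ∈ b := by
          simpa [vertsH] using hqB
        have hpb : p ∩ b = {q} := by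
          obtain ⟨z, hz⟩ := card_eq_one.mp (hpin b (Or.inr hb))
          have : q ∈ ({z} : Finset V) := hz ▸ mem_inter.mpr ⟨hqp, hqb⟩
          rw [mem_singleton] at this
          rw [hz, this]
        obtain ⟨x, hxab⟩ := hx a ha b hb
        obtain ⟨hxa, hxb⟩ := mem_inter.mp hxab
        have hxv : x ≠ v := by
          rintro rfl
          have : x ∈ ({q} : Finset V) := hpb ▸ mem_inter.mpr ⟨hvp, hxb⟩
          exact hqv ((mem_singleton.mp this).symm)
        have hxp : x ∉ p := by
          intro hxp
          have : x ∈ ({v} : Finset V) := hv ▸ mem_inter.mpr ⟨hxp, hxa⟩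
          exact hxv (mem_singleton.mp this)
        have hxq : q ≠ x := fun h => hxp (h ▸ hqp)
        have hbeq : ({q, x} : Finset V) = b := by
          apply eq_of_subset_of_card_le
          · intro y hy
            rcases mem_insert.mp hy with rfl | hy
            · exact hqb
            · exact mem_singleton.mp hy ▸ hxb
          · rw [hBu b hb, card_pair hxq]
        obtain ⟨y, hyab⟩ := hx a' ha' b hb
        obtain ⟨hya', hyb⟩ := mem_inter.mp hyab
        rw [← hbeq] at hyb
        rcases mem_insert.mp hyb with rfl | hyb
        · have : y ∈ ({v'} : Finset V) := hv' ▸ mem_inter.mpr ⟨hqp, hya'⟩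
          exact ⟨mem_singleton.mp this, x, hxa, hxv⟩
        · exact absurd ((mem_singleton.mp hyb) ▸ hya') (hna' x hxa)
      have hv'B : v' ∈ vertsH B := hV ▸ mem_vertsH ha' hva'
      obtain ⟨-, x, hxa, hxv⟩ := key v' hvp' hv'B (Ne.symm hvv')
      have h2r : 2 ≤ r := by
        rw [← har]
        exact one_lt_card.mpr ⟨v, hva, x, hxa, fun h => hxv h.symm⟩
      refine ⟨{v, v'}, ?_, le_trans (card_le_card (by intro y hy; exact hy) |>.trans
        (card_pair hvv').le) h2r⟩
      intro e he
      obtain ⟨q, hq⟩ := card_eq_one.mp (hpin e he)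
      have hqp : q ∈ p := (mem_inter.mp (hq ▸ mem_singleton_self q)).1
      have hqe : q ∈ e := (mem_inter.mp (hq ▸ mem_singleton_self q)).2
      have hqB : q ∈ vertsH B := by
        rcases he with he | he
        · exact hV ▸ mem_vertsH he hqe
        · exact mem_vertsH he hqe
      by_cases hqv : q = v
      · exact ⟨v, mem_inter.mpr ⟨mem_insert_self _ _, hqv ▸ hqe⟩⟩
      · obtain ⟨rfl, -⟩ := key q hqp hqB hqv
        exact ⟨q, mem_inter.mpr ⟨mem_insert_of_mem (mem_singleton_self _), hqe⟩⟩
  · push_neg at hA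
    refine ⟨∅, ?_, by simp⟩
    rintro e (he | he)
    · exact absurd he (hA e)
    · exfalso
      have h2 : e.card = 2 := hBu e he
      have : e.Nonempty := card_pos.mp (by omega)
      obtain ⟨y, hy⟩ := this
      have : y ∈ vertsH A := hV ▸ mem_vertsH he hy
      simp only [vertsH, Set.mem_iUnion] at this
      obtain ⟨e', he', _⟩ := this
      exact hA e' he'
end

section
/- Let (A,B) be an (r,s)-loom with τ*(A) = s. Then B equals A^⊥, the set of all vertex subsets meeting every edge of A in exactly one vertex. -/
open Finset

variable {V : Type*} [DecidableEq V]

variable [Fintype V]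

lemma sum_indicator_card (a t : Finset V) :
    ∑ v ∈ a, (if v ∈ t then (1:ℝ) else 0) = ((a ∩ t).card : ℝ) := by
  rw [Finset.sum_ite_mem, Finset.sum_const, nsmul_eq_mul, mul_one]

lemma mem_vertsH_s11 {H : Set (Finset V)} {v : V} :
    v ∈ vertsH H ↔ ∃ h ∈ H, v ∈ h := by
  simp [vertsH]

/-- in an `(r,s)`-loom with `τ*(A) = s`, `B` equals `A^⊥`,
the set of subsets of `V(A)` meeting every edge of `A` in exactly one vertex. -/
theorem stmt11 (r s : ℕ) (A B : Set (Finset V)) (hL : IsLoom r s A B)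
    (ht : FracCoverNumIs A (s : ℝ)) :
    B = {e : Finset V | (e : Set V) ⊆ vertsH A ∧ ∀ h ∈ A, (e ∩ h).card = 1} := by
  obtain ⟨hr, hs, horth, hAu, hBu, ⟨-, hAmin⟩, ⟨-, hBmin⟩, hACk, hBCk⟩ := hL
  -- A is nonempty
  have hAne : A.Nonempty := by
    by_contra h
    rw [Set.not_nonempty_iff_eq_empty] at h
    have : s ≤ (∅ : Finset V).card := hAmin ∅ (by intro a ha; simp [h] at ha)
    simp at this; omega
  -- every vertex of A is in some edge of B
  have hVAB : ∀ v ∈ vertsH A, ∃ b ∈ B, v ∈ b := by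
    intro v hv
    obtain ⟨a, haA, hva⟩ := mem_vertsH_s11.mp hv
    by_contra h
    push_neg at h
    have haCk : a ∈ Ck B r := hACk ▸ haA
    obtain ⟨hacard, hacov⟩ := haCk
    have hcov' : IsCoverH B (a.erase v) := by
      intro b hb
      obtain ⟨u, hu⟩ := hacov b hb
      rw [Finset.mem_inter] at hu
      exact ⟨u, Finset.mem_inter.mpr ⟨Finset.mem_erase.mpr ⟨fun huv => h b hb (huv ▸ hu.2), hu.1⟩, hu.2⟩⟩
    have := hBmin _ hcov'
    rw [Finset.card_erase_of_mem hva, hacard] at this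
    omega
  ext e
  simp only [Set.mem_setOf_eq]
  constructor
  · -- forward
    intro hb
    have hbCk : e ∈ Ck A s := hBCk ▸ hb
    obtain ⟨hecard, hecov⟩ := hbCk
    constructor
    · intro v hv
      rw [Finset.mem_coe] at hv
      by_contra hvA
      have hcov' : IsCoverH A (e.erase v) := by
        intro a ha
        obtain ⟨u, hu⟩ := hecov a ha
        rw [Finset.mem_inter] at hu
        refine ⟨u, Finset.mem_inter.mpr ⟨Finset.mem_erase.mpr ⟨fun huv => ?_, hu.1⟩, hu.2⟩⟩
        exact hvA (mem_vertsH_s11.mpr ⟨a, ha, huv ▸ hu.2⟩)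
      have := hAmin _ hcov'
      rw [Finset.card_erase_of_mem hv, hecard] at this
      omega
    · intro h hh
      rw [Finset.inter_comm]
      exact horth h hh e hb
  · -- reverse
    rintro ⟨hsub, hone⟩
    have hecov : IsCoverH A e := by
      intro a ha
      rw [← Finset.card_pos, hone a ha]; norm_num
    have hsle : s ≤ e.card := hAmin e hecov
    -- e nonempty
    obtain ⟨a₀, ha₀⟩ := hAne
    have hene : e.Nonempty := by
      have := hone a₀ ha₀
      have h1 : (e ∩ a₀).Nonempty := by rw [← Finset.card_pos, this]; norm_num
      exact h1.mono Finset.inter_subset_left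
    set n := e.card with hn
    have hn1 : 1 ≤ n := Finset.card_pos.mpr hene
    have hN : (0:ℝ) < (n:ℝ) := by exact_mod_cast hn1
    -- choose for each v ∈ e an edge of B containing it
    have hbex : ∀ v ∈ e, ∃ b, b ∈ B ∧ v ∈ b := by
      intro v hv
      obtain ⟨b, hb1, hb2⟩ := hVAB v (hsub hv)
      exact ⟨b, hb1, hb2⟩
    choose! bf hbB hvb using hbex
    set N := (n:ℝ) with hNdef
    set g : V → ℝ := fun v =>
      ((N+1) * (∑ u ∈ e, if v ∈ bf u then (1:ℝ) else 0) - N * (if v ∈ e then (1:ℝ) else 0)) / N^2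
      with hg
    have hgcover : IsFracCover A g := by
      constructor
      · intro v
        apply div_nonneg _ (sq_nonneg N)
        by_cases hv : v ∈ e
        · have h1 : (1:ℝ) ≤ ∑ u ∈ e, if v ∈ bf u then (1:ℝ) else 0 := by
            have := Finset.single_le_sum (f := fun u => if v ∈ bf u then (1:ℝ) else 0)
              (fun u _ => by positivity) hv
            simpa [hvb v hv] using this
          simp only [hv, if_true, mul_one]
          nlinarith
        · simp only [hv, if_false, mul_zero, sub_zero]
          have h0 : (0:ℝ) ≤ ∑ u ∈ e, if v ∈ bf u then (1:ℝ) else 0 :=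
            Finset.sum_nonneg fun u _ => by positivity
          nlinarith
      · intro a ha
        have hsum : ∑ v ∈ a, g v = 1 := by
          simp only [hg]
          rw [← Finset.sum_div]
          rw [Finset.sum_sub_distrib, ← Finset.mul_sum, ← Finset.mul_sum]
          rw [Finset.sum_comm (s := a) (t := e)]
          have h1 : ∀ u ∈ e, ∑ v ∈ a, (if v ∈ bf u then (1:ℝ) else 0) = 1 := by
            intro u hu
            rw [sum_indicator_card, horth a ha (bf u) (hbB u hu)]
            norm_num
          rw [Finset.sum_congr rfl h1, Finset.sum_const, nsmul_eq_mul, mul_one]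
          rw [sum_indicator_card, Finset.inter_comm, hone a ha]
          push_cast
          rw [← hNdef]
          field_simp
          ring
        rw [hsum]
    have htot : ∑ v : V, g v = (N+1) * (N * s) / N^2 - 1 := by
      simp only [hg]
      rw [← Finset.sum_div, Finset.sum_sub_distrib, ← Finset.mul_sum, ← Finset.mul_sum]
      rw [Finset.sum_comm (s := Finset.univ) (t := e)]
      have h1 : ∀ u ∈ e, ∑ v : V, (if v ∈ bf u then (1:ℝ) else 0) = (s:ℝ) := by
        intro u hu
        rw [sum_indicator_card, Finset.univ_inter, hBu (bf u) (hbB u hu)]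
      rw [Finset.sum_congr rfl h1, Finset.sum_const, nsmul_eq_mul]
      rw [sum_indicator_card, Finset.univ_inter, ← hn, ← hNdef]
      field_simp
    have hfinal := ht.2 g hgcover
    rw [htot] at hfinal
    -- conclude n ≤ s
    have hns : (n:ℝ) ≤ (s:ℝ) := by
      have hN2 : (0:ℝ) < N^2 := pow_pos hN 2
      have h2 : ((s:ℝ)+1) * N^2 ≤ (N+1) * (N * s) :=
        (le_div_iff₀ hN2).mp (by linarith : ((s:ℝ)+1) ≤ (N+1) * (N * s) / N^2)
      have hNn : N = (n:ℝ) := hNdef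
      rw [hNn] at h2 hN
      nlinarith [h2, hN]
    have : n ≤ s := by exact_mod_cast hns
    have hcard : e.card = s := le_antisymm (by omega) hsle
    have : e ∈ Ck A s := ⟨hcard, hecov⟩
    rw [hBCk]
    exact this
end

section
/- If (A1,B1) is an (a,b)-loom and (A2,B2) is a (c,b)-loom on disjoint vertex sets, then (A1 * A2, B1 ∪ B2) is an (a+c, b)-loom, where A1 * A2 = {e ∪ f : e ∈ A1, f ∈ A2}. -/
open Finset

variable {V : Type*} [DecidableEq V]

/-- The join of two hypergraphs. -/
def joinH (A C : Set (Finset V)) : Set (Finset V) := {x | ∃ a ∈ A, ∃ c ∈ C, x = a ∪ c}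

lemma coe_subset_vertsH {H : Set (Finset V)} {e : Finset V} (he : e ∈ H) :
    (e : Set V) ⊆ vertsH H := fun v hv => Set.mem_biUnion he hv

lemma join_cover_cases {A1 A2 : Set (Finset V)} {c : Finset V} (hA1 : A1.Nonempty)
    (hc : IsCoverH (joinH A1 A2) c) : IsCoverH A1 c ∨ IsCoverH A2 c := by
  by_cases h : IsCoverH A1 c
  · exact Or.inl h
  · right
    simp only [IsCoverH, not_forall] at h
    obtain ⟨e, he, hne⟩ := h
    intro f hf
    have := hc (e ∪ f) ⟨e, he, f, hf, rfl⟩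
    rw [Finset.inter_union_distrib_left] at this
    obtain ⟨v, hv⟩ := this
    rw [Finset.mem_union] at hv
    rcases hv with hv | hv
    · exact absurd ⟨v, hv⟩ hne
    · exact ⟨v, hv⟩

/-- the 1-composition of an `(a,b)`-loom and a `(c,b)`-loom on
disjoint vertex sets is an `(a+c,b)`-loom. -/
theorem stmt13 (a b c : ℕ) (A1 B1 A2 B2 : Set (Finset V))
    (h1 : IsLoom a b A1 B1) (h2 : IsLoom c b A2 B2)
    (hd : Disjoint (vertsH A1 ∪ vertsH B1) (vertsH A2 ∪ vertsH B2)) :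
    IsLoom (a + c) b (joinH A1 A2) (B1 ∪ B2) := by
  classical
  obtain ⟨ha1, hb1, horth1, hua1, hub1, hcA1, hcB1, hA1eq, hB1eq⟩ := h1
  obtain ⟨hc1, hb1', horth2, hua2, hub2, hcA2, hcB2, hA2eq, hB2eq⟩ := h2
  -- disjointness helper
  have hdisj : ∀ {e f : Finset V}, (e : Set V) ⊆ vertsH A1 ∪ vertsH B1 →
      (f : Set V) ⊆ vertsH A2 ∪ vertsH B2 → Disjoint e f := by
    intro e f he hf
    exact Finset.disjoint_coe.mp (Set.disjoint_of_subset he hf hd)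
  have hdA : ∀ e ∈ A1, ∀ f ∈ A2, Disjoint e f := fun e he f hf =>
    hdisj ((coe_subset_vertsH he).trans Set.subset_union_left)
      ((coe_subset_vertsH hf).trans Set.subset_union_left)
  have hdAB : ∀ e ∈ A2, ∀ g ∈ B1, Disjoint g e := fun e he g hg =>
    hdisj ((coe_subset_vertsH hg).trans Set.subset_union_right)
      ((coe_subset_vertsH he).trans Set.subset_union_left)
  have hdBA : ∀ e ∈ A1, ∀ g ∈ B2, Disjoint e g := fun e he g hg =>
    hdisj ((coe_subset_vertsH he).trans Set.subset_union_left)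
      ((coe_subset_vertsH hg).trans Set.subset_union_right)
  -- nonemptiness of A1, A2
  have hA1ne : A1.Nonempty := by
    obtain ⟨c0, hc0, hcard⟩ := hcB1.1
    exact ⟨c0, by rw [hA1eq]; exact ⟨hcard, hc0⟩⟩
  have hA2ne : A2.Nonempty := by
    obtain ⟨c0, hc0, hcard⟩ := hcB2.1
    exact ⟨c0, by rw [hA2eq]; exact ⟨hcard, hc0⟩⟩
  -- every edge of A1 covers B1, every edge of A2 covers B2
  have hA1cov : ∀ e ∈ A1, e.card = a ∧ IsCoverH B1 e := fun e he => by
    rw [hA1eq] at he; exact he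
  have hA2cov : ∀ e ∈ A2, e.card = c ∧ IsCoverH B2 e := fun e he => by
    rw [hA2eq] at he; exact he
  -- filtered covers: lower bound for covers of B1 ∪ B2
  have hfilter : ∀ cv : Finset V, IsCoverH (B1 ∪ B2) cv →
      IsCoverH B1 (cv.filter (· ∈ vertsH B1)) ∧
      IsCoverH B2 (cv.filter (· ∈ vertsH B2)) ∧
      Disjoint (cv.filter (· ∈ vertsH B1)) (cv.filter (· ∈ vertsH B2)) := by
    intro cv hcv
    refine ⟨?_, ?_, ?_⟩
    · intro g hg
      obtain ⟨v, hv⟩ := hcv g (Or.inl hg)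
      rw [Finset.mem_inter] at hv
      exact ⟨v, Finset.mem_inter.mpr ⟨Finset.mem_filter.mpr
        ⟨hv.1, coe_subset_vertsH hg hv.2⟩, hv.2⟩⟩
    · intro g hg
      obtain ⟨v, hv⟩ := hcv g (Or.inr hg)
      rw [Finset.mem_inter] at hv
      exact ⟨v, Finset.mem_inter.mpr ⟨Finset.mem_filter.mpr
        ⟨hv.1, coe_subset_vertsH hg hv.2⟩, hv.2⟩⟩
    · refine Finset.disjoint_left.mpr fun v hv1 hv2 => ?_
      have h1 := (Finset.mem_filter.mp hv1).2
      have h2 := (Finset.mem_filter.mp hv2).2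
      exact Set.disjoint_left.mp hd (Or.inr h1) (Or.inr h2)
  refine ⟨by omega, hb1, ?_, ?_, ?_, ?_, ?_, ?_, ?_⟩
  -- orthogonality
  · rintro x ⟨e, he, f, hf, rfl⟩ g hg
    rcases hg with hg | hg
    · rw [Finset.union_inter_distrib_right,
        Finset.disjoint_iff_inter_eq_empty.mp (hdAB f hf g hg).symm,
        Finset.union_empty]
      exact horth1 e he g hg
    · rw [Finset.union_inter_distrib_right,
        Finset.disjoint_iff_inter_eq_empty.mp (hdBA e he g hg), Finset.empty_union]
      exact horth2 f hf g hg
  -- uniformity of the join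
  · rintro x ⟨e, he, f, hf, rfl⟩
    rw [Finset.card_union_of_disjoint (hdA e he f hf), hua1 e he, hua2 f hf]
  -- uniformity of B1 ∪ B2
  · rintro g hg
    rcases hg with hg | hg
    · exact hub1 g hg
    · exact hub2 g hg
  -- covering number of the join is b
  · constructor
    · obtain ⟨c0, hc0, hcard⟩ := hcA1.1
      refine ⟨c0, ?_, hcard⟩
      rintro x ⟨e, he, f, hf, rfl⟩
      obtain ⟨v, hv⟩ := hc0 e he
      rw [Finset.mem_inter] at hv
      exact ⟨v, Finset.mem_inter.mpr ⟨hv.1, Finset.mem_union_left _ hv.2⟩⟩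
    · intro cv hcv
      rcases join_cover_cases hA1ne hcv with h | h
      · exact hcA1.2 cv h
      · exact hcA2.2 cv h
  -- covering number of B1 ∪ B2 is a + c
  · constructor
    · obtain ⟨e, he⟩ := hA1ne
      obtain ⟨f, hf⟩ := hA2ne
      refine ⟨e ∪ f, ?_, ?_⟩
      · rintro g (hg | hg)
        · obtain ⟨v, hv⟩ := (hA1cov e he).2 g hg
          rw [Finset.mem_inter] at hv
          exact ⟨v, Finset.mem_inter.mpr ⟨Finset.mem_union_left _ hv.1, hv.2⟩⟩
        · obtain ⟨v, hv⟩ := (hA2cov f hf).2 g hg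
          rw [Finset.mem_inter] at hv
          exact ⟨v, Finset.mem_inter.mpr ⟨Finset.mem_union_right _ hv.1, hv.2⟩⟩
      · rw [Finset.card_union_of_disjoint (hdA e he f hf), (hA1cov e he).1,
          (hA2cov f hf).1]
    · intro cv hcv
      obtain ⟨hcv1, hcv2, hdc⟩ := hfilter cv hcv
      calc a + c ≤ (cv.filter (· ∈ vertsH B1)).card + (cv.filter (· ∈ vertsH B2)).card :=
            Nat.add_le_add (hcB1.2 _ hcv1) (hcB2.2 _ hcv2)
        _ = (cv.filter (· ∈ vertsH B1) ∪ cv.filter (· ∈ vertsH B2)).card :=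
            (Finset.card_union_of_disjoint hdc).symm
        _ ≤ cv.card := Finset.card_le_card
            (Finset.union_subset (Finset.filter_subset _ _) (Finset.filter_subset _ _))
  -- joinH A1 A2 = Ck (B1 ∪ B2) (a + c)
  · ext x
    constructor
    · rintro ⟨e, he, f, hf, rfl⟩
      refine ⟨by rw [Finset.card_union_of_disjoint (hdA e he f hf), (hA1cov e he).1,
          (hA2cov f hf).1], ?_⟩
      rintro g (hg | hg)
      · obtain ⟨v, hv⟩ := (hA1cov e he).2 g hg
        rw [Finset.mem_inter] at hv
        exact ⟨v, Finset.mem_inter.mpr ⟨Finset.mem_union_left _ hv.1, hv.2⟩⟩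
      · obtain ⟨v, hv⟩ := (hA2cov f hf).2 g hg
        rw [Finset.mem_inter] at hv
        exact ⟨v, Finset.mem_inter.mpr ⟨Finset.mem_union_right _ hv.1, hv.2⟩⟩
    · rintro ⟨hcard, hcov⟩
      obtain ⟨hcv1, hcv2, hdc⟩ := hfilter x hcov
      set x1 := x.filter (· ∈ vertsH B1) with hx1
      set x2 := x.filter (· ∈ vertsH B2) with hx2
      have hle1 : a ≤ x1.card := hcB1.2 _ hcv1
      have hle2 : c ≤ x2.card := hcB2.2 _ hcv2
      have hsub : x1 ∪ x2 ⊆ x :=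
        Finset.union_subset (Finset.filter_subset _ _) (Finset.filter_subset _ _)
      have hcardle : x1.card + x2.card ≤ a + c := by
        rw [← Finset.card_union_of_disjoint hdc, ← hcard]
        exact Finset.card_le_card hsub
      have he1 : x1.card = a := le_antisymm (by omega) hle1
      have he2 : x2.card = c := le_antisymm (by omega) hle2
      have hxeq : x = x1 ∪ x2 := by
        refine (Finset.eq_of_subset_of_card_le hsub ?_).symm
        rw [Finset.card_union_of_disjoint hdc, he1, he2, hcard]
      refine ⟨x1, ?_, x2, ?_, hxeq⟩
      · rw [hA1eq]; exact ⟨he1, hcv1⟩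
      · rw [hA2eq]; exact ⟨he2, hcv2⟩
  -- B1 ∪ B2 = Ck (joinH A1 A2) b
  · ext g
    constructor
    · rintro (hg | hg)
      · have hg' : g ∈ Ck A1 b := by rw [← hB1eq]; exact hg
        refine ⟨hg'.1, ?_⟩
        rintro x ⟨e, he, f, hf, rfl⟩
        obtain ⟨v, hv⟩ := hg'.2 e he
        rw [Finset.mem_inter] at hv
        exact ⟨v, Finset.mem_inter.mpr ⟨hv.1, Finset.mem_union_left _ hv.2⟩⟩
      · have hg' : g ∈ Ck A2 b := by rw [← hB2eq]; exact hg
        refine ⟨hg'.1, ?_⟩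
        rintro x ⟨e, he, f, hf, rfl⟩
        obtain ⟨v, hv⟩ := hg'.2 f hf
        rw [Finset.mem_inter] at hv
        exact ⟨v, Finset.mem_inter.mpr ⟨hv.1, Finset.mem_union_right _ hv.2⟩⟩
    · rintro ⟨hcard, hcov⟩
      rcases join_cover_cases hA1ne hcov with h | h
      · left; rw [hB1eq]; exact ⟨hcard, h⟩
      · right; rw [hB2eq]; exact ⟨hcard, h⟩
end

section
/- In an (r,2)-loom (A,B), every connected component of the graph B is a complete bipartite graph with two sides of equal size. -/
open Finset

variable {V : Type*} [DecidableEq V]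

/-- The 1-skeleton of a hypergraph: two vertices are adjacent if distinct
and contained in a common edge. -/
def hGraph (H : Set (Finset V)) : SimpleGraph V where
  Adj u v := u ≠ v ∧ ∃ e ∈ H, u ∈ e ∧ v ∈ e
  symm := by
    constructor
    rintro u v ⟨huv, e, he, hu, hv⟩
    exact ⟨huv.symm, e, he, hv, hu⟩
  loopless := by
    constructor
    rintro v ⟨hv, -⟩
    exact hv rfl

/-- A hypergraph is connected if its 1-skeleton is connected on its vertex set. -/
def ConnH (H : Set (Finset V)) : Prop :=
  ∀ u ∈ vertsH H, ∀ v ∈ vertsH H, (hGraph H).Reachable u v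

/-- Auxiliary: if a set meets a pair in exactly one vertex, exactly one endpoint is in it. -/
lemma loom_one_of_pair {a e : Finset V} {u w : V} (huw : u ≠ w) (he : e = {u, w})
    (h : (a ∩ e).card = 1) : (u ∈ a ↔ w ∉ a) := by
  subst he
  by_cases hu : u ∈ a <;> by_cases hw : w ∈ a
  · exfalso
    have hsub : ({u, w} : Finset V) ⊆ a ∩ {u, w} := by
      intro z hz
      simp only [mem_insert, mem_singleton] at hz
      rcases hz with rfl | rfl <;> simp [hu, hw]
    have := Finset.card_le_card hsub
    rw [Finset.card_pair huw, h] at this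
    omega
  · tauto
  · tauto
  · exfalso
    have : a ∩ {u, w} = ∅ := by
      ext z
      simp only [mem_inter, mem_insert, mem_singleton, notMem_empty, iff_false]
      rintro ⟨hz, rfl | rfl⟩ <;> tauto
    rw [this] at h; simp at h

/-- in an `(r,2)`-loom, every connected component of the graph `B`
is a complete bipartite graph with two sides of equal size. -/
theorem stmt15 (r : ℕ) (A B : Set (Finset V)) (hL : IsLoom r 2 A B) :
    ∀ v ∈ vertsH B, ∃ X Y : Set V, Disjoint X Y ∧
      X ∪ Y = {u | (hGraph B).Reachable v u} ∧ X.ncard = Y.ncard ∧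
      (∀ e : Finset V, (e ∈ B ∧ (e : Set V) ⊆ X ∪ Y) ↔
        ∃ x ∈ X, ∃ y ∈ Y, e = ({x, y} : Finset V)) := by
  obtain ⟨hr1, -, orth, unifA, unifB, covA, covB, hAeq, hBeq⟩ := hL
  intro v hv
  -- every element of A is an r-element cover of B
  have hAcov : ∀ a ∈ A, IsCoverH B a := by
    intro a ha; rw [hAeq] at ha; exact ha.2
  -- every edge of B is a pair
  have hBpair : ∀ e ∈ B, ∃ p q : V, p ≠ q ∧ e = {p, q} := by
    intro e he
    obtain ⟨p, q, hpq, hepq⟩ := Finset.card_eq_two.mp (unifB e he)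
    exact ⟨p, q, hpq, hepq⟩
  -- alternation: each a ∈ A contains exactly one endpoint of each edge
  have hadj : ∀ a ∈ A, ∀ u w : V, (hGraph B).Adj u w → (u ∈ a ↔ w ∉ a) := by
    rintro a ha u w ⟨hne, e, heB, hu, hw⟩
    have hsub : ({u, w} : Finset V) ⊆ e := by
      intro z hz
      simp only [mem_insert, mem_singleton] at hz
      rcases hz with rfl | rfl <;> assumption
    have hcard : e.card ≤ ({u, w} : Finset V).card := by
      rw [unifB e heB, Finset.card_pair hne]
    have hee : e = {u, w} := (Finset.eq_of_subset_of_card_le hsub hcard).symm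
    exact loom_one_of_pair hne hee (orth a ha e heB)
  -- membership pattern is constant along components
  have hconst : ∀ a ∈ A, ∀ a' ∈ A, ∀ u w : V, (hGraph B).Reachable u w →
      ((u ∈ a' ↔ u ∈ a) ↔ (w ∈ a' ↔ w ∈ a)) := by
    intro a ha a' ha' u w hr
    obtain ⟨p⟩ := hr
    induction p with
    | nil => exact Iff.rfl
    | cons h q ih =>
      have s1 := hadj a ha _ _ h
      have s2 := hadj a' ha' _ _ h
      exact Iff.trans (by tauto) ih
  -- a base element of A
  obtain ⟨a0, ha0cov, ha0card⟩ := covB.1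
  have ha0 : a0 ∈ A := by rw [hAeq]; exact ⟨ha0card, ha0cov⟩
  -- the component and the two sides
  set K : Set V := {u | (hGraph B).Reachable v u} with hKdef
  set X : Set V := {u ∈ K | u ∈ a0} with hXdef
  set Y : Set V := {u ∈ K | u ∉ a0} with hYdef
  have hXY : X ∪ Y = K := by
    ext u; simp only [hXdef, hYdef, Set.mem_union, Set.mem_setOf_eq]; tauto
  have hKadj : ∀ u w : V, u ∈ K → (hGraph B).Adj u w → w ∈ K := by
    intro u w hu h
    exact hu.trans h.reachable
  -- classification of elements of A on K
  have hclass : ∀ a ∈ A, (∀ u ∈ K, (u ∈ a ↔ u ∈ a0)) ∨ (∀ u ∈ K, (u ∈ a ↔ u ∉ a0)) := by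
    intro a ha
    by_cases hva : v ∈ a ↔ v ∈ a0
    · left; intro u hu; exact (hconst a0 ha0 a ha v u hu).mp hva
    · right; intro u hu; have h := hconst a0 ha0 a ha v u hu; tauto
  -- completeness: every X-Y pair is an edge
  have hcomp : ∀ x ∈ X, ∀ y ∈ Y, ({x, y} : Finset V) ∈ B := by
    intro x hx y hy
    have hxy : x ≠ y := by rintro rfl; exact hy.2 hx.2
    rw [hBeq]
    refine ⟨Finset.card_pair hxy, ?_⟩
    intro a ha
    rcases hclass a ha with h | h
    · exact ⟨x, Finset.mem_inter.mpr ⟨by simp, (h x hx.1).mpr hx.2⟩⟩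
    · exact ⟨y, Finset.mem_inter.mpr ⟨by simp, (h y hy.1).mpr hy.2⟩⟩
  -- X and Y are nonempty
  have hvK : v ∈ K := SimpleGraph.Reachable.refl v
  obtain ⟨e0, he0B, hve0⟩ : ∃ e0 ∈ B, v ∈ e0 := by
    simpa [vertsH] using hv
  obtain ⟨p0, q0, hp0q0, he0pq⟩ := hBpair e0 he0B
  obtain ⟨w, hwmem, hvw⟩ : ∃ w : V, w ∈ e0 ∧ v ≠ w := by
    subst he0pq
    simp only [mem_insert, mem_singleton] at hve0
    rcases hve0 with rfl | rfl
    · exact ⟨q0, by simp, hp0q0⟩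
    · exact ⟨p0, by simp, Ne.symm hp0q0⟩
  have hvwadj : (hGraph B).Adj v w := ⟨hvw, e0, he0B, hve0, hwmem⟩
  have hwK : w ∈ K := hKadj v w hvK hvwadj
  have hvwa0 := hadj a0 ha0 v w hvwadj
  obtain ⟨x0, hx0⟩ : X.Nonempty := by
    by_cases hva0 : v ∈ a0
    · exact ⟨v, hvK, hva0⟩
    · exact ⟨w, hwK, by tauto⟩
  -- an element of A whose trace on K is Y
  obtain ⟨a1, ha1, ha1Y⟩ : ∃ a1 ∈ A, ∀ u ∈ K, (u ∈ a1 ↔ u ∉ a0) := by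
    have hnc : ¬ IsCoverH A ({x0} : Finset V) := by
      intro hc
      have := covA.2 _ hc
      simp at this
    simp only [IsCoverH, not_forall] at hnc
    obtain ⟨a1, ha1, hne⟩ := hnc
    have hx0a1 : x0 ∉ a1 := by
      intro h
      exact hne ⟨x0, Finset.mem_inter.mpr ⟨by simp, h⟩⟩
    refine ⟨a1, ha1, ?_⟩
    rcases hclass a1 ha1 with h | h
    · exact absurd ((h x0 hx0.1).mpr hx0.2) hx0a1
    · exact h
  -- finiteness of the sides
  have hXfin : X.Finite := a0.finite_toSet.subset (fun u hu => hu.2)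
  have hYfin : Y.Finite := a1.finite_toSet.subset (fun u hu => (ha1Y u hu.1).mpr hu.2)
  set Xf := hXfin.toFinset with hXf
  set Yf := hYfin.toFinset with hYf
  have hXfs : ∀ u, u ∈ Xf ↔ u ∈ X := fun u => hXfin.mem_toFinset
  have hYfs : ∀ u, u ∈ Yf ↔ u ∈ Y := fun u => hYfin.mem_toFinset
  have hXfa0 : Xf ⊆ a0 := fun u hu => ((hXfs u).mp hu).2
  have hYfa1 : Yf ⊆ a1 := fun u hu => (ha1Y u ((hYfs u).mp hu).1).mpr ((hYfs u).mp hu).2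
  -- edges touching K classify into an X-endpoint and a Y-endpoint
  have hedgeK : ∀ p q : V, p ≠ q → ({p, q} : Finset V) ∈ B → p ∈ K →
      p ∈ X ∧ q ∈ Y ∨ p ∈ Y ∧ q ∈ X := by
    intro p q hne heB hp
    have hadjpq : (hGraph B).Adj p q := ⟨hne, {p, q}, heB, by simp, by simp⟩
    have hq : q ∈ K := hKadj p q hp hadjpq
    have h := hadj a0 ha0 p q hadjpq
    by_cases hpa : p ∈ a0
    · exact Or.inl ⟨⟨hp, hpa⟩, ⟨hq, by tauto⟩⟩
    · exact Or.inr ⟨⟨hp, hpa⟩, ⟨hq, by tauto⟩⟩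
  -- swapping argument
  have hswap : ∀ a ∈ A, ∀ Zf Wf : Finset V, Zf ⊆ a → (∀ u ∈ Zf, u ∈ K) →
      (∀ p q : V, p ≠ q → ({p, q} : Finset V) ∈ B → p ∈ K → p ∈ Wf ∨ q ∈ Wf) →
      r ≤ a.card - Zf.card + Wf.card := by
    intro a ha Zf Wf hZa hZK hWcov
    set c : Finset V := (a \ Zf) ∪ Wf with hc
    have hcov : IsCoverH B c := by
      intro e heB
      obtain ⟨p, q, hne, rfl⟩ := hBpair e heB
      by_cases hp : p ∈ K
      · rcases hWcov p q hne heB hp with h | h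
        · exact ⟨p, Finset.mem_inter.mpr ⟨Finset.mem_union_right _ h, by simp⟩⟩
        · exact ⟨q, Finset.mem_inter.mpr ⟨Finset.mem_union_right _ h, by simp⟩⟩
      · obtain ⟨z, hz⟩ := hAcov a ha _ heB
        rw [Finset.mem_inter] at hz
        have hzK : z ∉ K := by
          simp only [mem_insert, mem_singleton] at hz
          have hadjqp : (hGraph B).Adj q p :=
            ⟨hne.symm, {p, q}, heB, by simp, by simp⟩
          rcases hz.2 with rfl | rfl
          · exact hp
          · exact fun hq => hp (hKadj z p hq hadjqp)
        exact ⟨z, Finset.mem_inter.mpr ⟨Finset.mem_union_left _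
          (Finset.mem_sdiff.mpr ⟨hz.1, fun hzZ => hzK (hZK z hzZ)⟩), hz.2⟩⟩
    calc r ≤ c.card := covB.2 c hcov
    _ ≤ (a \ Zf).card + Wf.card := Finset.card_union_le _ _
    _ = a.card - Zf.card + Wf.card := by rw [Finset.card_sdiff_of_subset hZa]
  -- equal cardinalities
  have hcard1 : r ≤ a1.card - Yf.card + Xf.card :=
    hswap a1 ha1 Yf Xf hYfa1 (fun u hu => ((hYfs u).mp hu).1)
      (fun p q hne heB hp => by
        rcases hedgeK p q hne heB hp with h | h
        · exact Or.inl ((hXfs p).mpr h.1)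
        · exact Or.inr ((hXfs q).mpr h.2))
  have hcard2 : r ≤ a0.card - Xf.card + Yf.card :=
    hswap a0 ha0 Xf Yf hXfa0 (fun u hu => ((hXfs u).mp hu).1)
      (fun p q hne heB hp => by
        rcases hedgeK p q hne heB hp with h | h
        · exact Or.inr ((hYfs q).mpr h.2)
        · exact Or.inl ((hYfs p).mpr h.1))
  have ha1card : a1.card = r := unifA a1 ha1
  have hYle : Yf.card ≤ r := ha1card ▸ Finset.card_le_card hYfa1
  have hXle : Xf.card ≤ r := ha0card ▸ Finset.card_le_card hXfa0
  rw [ha1card] at hcard1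
  rw [ha0card] at hcard2
  have hXYcard : Xf.card = Yf.card := by omega
  refine ⟨X, Y, ?_, hXY, ?_, ?_⟩
  · exact Set.disjoint_left.mpr (fun u hu hu' => hu'.2 hu.2)
  · rw [Set.ncard_eq_toFinset_card X hXfin, Set.ncard_eq_toFinset_card Y hYfin]
    exact hXYcard
  · intro e
    constructor
    · rintro ⟨heB, hsub⟩
      obtain ⟨p, q, hne, rfl⟩ := hBpair e heB
      have hp : p ∈ K := by
        rw [← hXY]
        exact hsub (by simp)
      rcases hedgeK p q hne heB hp with h | h
      · exact ⟨p, h.1, q, h.2, rfl⟩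
      · exact ⟨q, h.2, p, h.1, Finset.pair_comm p q⟩
    · rintro ⟨x, hx, y, hy, rfl⟩
      refine ⟨hcomp x hx y hy, ?_⟩
      intro z hz
      simp only [Finset.coe_insert, Finset.coe_singleton, Set.mem_insert_iff,
        Set.mem_singleton_iff] at hz
      rcases hz with rfl | rfl
      · exact Or.inl hx
      · exact Or.inr hy
end

section
/- For even n ≥ 6, the pair (PM(K_n), ST(K_n)) is an (n/2, n−1)-loom, where PM(K_n) is the set of perfect matchings of the complete graph K_n (as sets of edges) and ST(K_n) is the set of vertex stars. -/
open Finset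

open scoped Classical

variable {V : Type*} [DecidableEq V]

/-- The perfect matchings of the complete graph `K_n`, as sets of edges. -/
def PMn (n : ℕ) : Set (Finset (Sym2 (Fin n))) :=
  {M | (∀ e ∈ M, ¬ e.IsDiag) ∧ ∀ v : Fin n, ∃! e, e ∈ M ∧ v ∈ e}

/-- The vertex stars of `K_n`, as sets of edges. -/
def STn (n : ℕ) : Set (Finset (Sym2 (Fin n))) :=
  {S | ∃ v : Fin n,
    S = Finset.univ.filter (fun e : Sym2 (Fin n) => v ∈ e ∧ ¬ e.IsDiag)}

section Stmt16Aux
variable {n : ℕ}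

lemma verts_card {e : Sym2 (Fin n)} (h : ¬ e.IsDiag) :
    (univ.filter (fun v => v ∈ e)).card = 2 := by
  induction e using Sym2.inductionOn with
  | _ x y =>
    rw [Sym2.mk_isDiag_iff] at h
    have : (univ.filter (fun v => v ∈ s(x,y))) = {x, y} := by
      ext v; simp [Sym2.mem_iff]
    rw [this, card_insert_of_notMem (by simp [h]), card_singleton]

lemma star_card (v : Fin n) :
    (univ.filter (fun e : Sym2 (Fin n) => v ∈ e ∧ ¬ e.IsDiag)).card = n - 1 := by
  have himg : (univ.filter (fun e : Sym2 (Fin n) => v ∈ e ∧ ¬ e.IsDiag)) =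
      (univ.erase v).image (fun w => s(v, w)) := by
    ext e
    simp only [mem_filter, mem_univ, true_and, mem_image, mem_erase]
    constructor
    · rintro ⟨hv, hd⟩
      induction e using Sym2.inductionOn with
      | _ x y =>
        rw [Sym2.mk_isDiag_iff] at hd
        rcases Sym2.mem_iff.1 hv with rfl | rfl
        · exact ⟨y, ⟨fun h => hd h.symm, trivial⟩, rfl⟩
        · exact ⟨x, ⟨fun h => hd h, trivial⟩, Sym2.eq_swap⟩
    · rintro ⟨w, ⟨hw, -⟩, rfl⟩
      exact ⟨Sym2.mem_mk_left v w, by simp [Sym2.mk_isDiag_iff, Ne.symm hw]⟩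
  rw [himg, card_image_of_injOn, card_erase_of_mem (mem_univ v), card_univ, Fintype.card_fin]
  intro a _ b _ hab
  exact Sym2.congr_right.1 hab

lemma pm_card (hn : Even n) {M : Finset (Sym2 (Fin n))} (hM : M ∈ PMn n) :
    M.card = n / 2 := by
  obtain ⟨hd, hu⟩ := hM
  have f : ∀ v : Fin n, ∃ e, e ∈ M ∧ v ∈ e := fun v => (hu v).exists
  classical
  have key : (univ : Finset (Fin n)).card = ∑ e ∈ M, (univ.filter (fun v => (f v).choose = e)).card := by
    apply card_eq_sum_card_fiberwise
    intro v _
    exact ((f v).choose_spec).1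
  have fib : ∀ e ∈ M, (univ.filter (fun v => (f v).choose = e)) = univ.filter (fun v => v ∈ e) := by
    intro e he
    ext v
    simp only [mem_filter, mem_univ, true_and]
    constructor
    · rintro rfl; exact ((f v).choose_spec).2
    · intro hv
      exact (hu v).unique ⟨((f v).choose_spec).1, ((f v).choose_spec).2⟩ ⟨he, hv⟩
  have h2 : ∑ e ∈ M, (univ.filter (fun v => (f v).choose = e)).card = ∑ e ∈ M, 2 :=
    Finset.sum_congr rfl (fun e he => by rw [fib e he, verts_card (hd e he)])
  have h3 : n = 2 * M.card := by
    have := key.trans h2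
    simpa [Finset.sum_const, mul_comm] using this
  omega

lemma orth_pm_st {M : Finset (Sym2 (Fin n))} (hM : M ∈ PMn n) (v : Fin n) :
    (M ∩ univ.filter (fun e : Sym2 (Fin n) => v ∈ e ∧ ¬ e.IsDiag)).card = 1 := by
  obtain ⟨hd, hu⟩ := hM
  obtain ⟨e, ⟨heM, hev⟩, hun⟩ := hu v
  have : M ∩ univ.filter (fun e : Sym2 (Fin n) => v ∈ e ∧ ¬ e.IsDiag) = {e} := by
    ext f
    simp only [mem_inter, mem_filter, mem_univ, true_and, mem_singleton]
    constructor
    · rintro ⟨hfM, hfv, -⟩; exact hun f ⟨hfM, hfv⟩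
    · rintro rfl; exact ⟨heM, hev, hd _ heM⟩
  rw [this, card_singleton]

/-- Partial matchings on a vertex subset. -/
def PMon (T : Finset (Fin n)) (M : Finset (Sym2 (Fin n))) : Prop :=
  (∀ e ∈ M, ¬ e.IsDiag) ∧ (∀ e ∈ M, ∀ v ∈ e, v ∈ T) ∧ (∀ v ∈ T, ∃! e, e ∈ M ∧ v ∈ e)

lemma exists_pmon : ∀ (T : Finset (Fin n)), Even T.card → ∃ M, PMon T M := by
  intro T
  induction T using Finset.strongInduction with
  | _ T ih =>
    intro hT
    rcases T.eq_empty_or_nonempty with rfl | ⟨a, ha⟩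
    · exact ⟨∅, by simp, by simp, by simp⟩
    · have h2 : 2 ≤ T.card := by
        rcases hT with ⟨k, hk⟩
        have : 1 ≤ T.card := card_pos.2 ⟨a, ha⟩
        omega
      obtain ⟨b, hb, hba⟩ : ∃ b ∈ T, b ≠ a := by
        obtain ⟨b, hb⟩ := Finset.card_pos.mp (show 0 < (T.erase a).card by rw [card_erase_of_mem ha]; omega)
        exact ⟨b, mem_of_mem_erase hb, ne_of_mem_erase hb⟩
      set T' := (T.erase a).erase b with hT'
      have hsub : T' ⊂ T := by
        apply Finset.ssubset_of_subset_of_ssubset (erase_subset _ _)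
        exact Finset.erase_ssubset ha
      have hcard : T'.card = T.card - 2 := by
        rw [hT', card_erase_of_mem (mem_erase.2 ⟨hba, hb⟩), card_erase_of_mem ha]; omega
      obtain ⟨M', hM'⟩ := ih T' hsub (by rcases hT with ⟨k, hk⟩; rw [hcard]; exact ⟨k-1, by omega⟩)
      obtain ⟨hd', hv', hu'⟩ := hM'
      refine ⟨insert s(a,b) M', ?_, ?_, ?_⟩
      · intro e he
        rcases mem_insert.1 he with rfl | he'
        · simp [Sym2.mk_isDiag_iff, Ne.symm hba]
        · exact hd' e he'
      · intro e he v hv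
        rcases mem_insert.1 he with rfl | he'
        · rcases Sym2.mem_iff.1 hv with rfl | rfl
          · exact ha
          · exact hb
        · exact mem_of_mem_erase (mem_of_mem_erase (hv' e he' v hv))
      · intro v hvT
        by_cases hvab : v = a ∨ v = b
        · refine ⟨s(a,b), ⟨mem_insert_self _ _, by rcases hvab with rfl | rfl <;> simp [Sym2.mem_iff]⟩, ?_⟩
          rintro f ⟨hf, hvf⟩
          rcases mem_insert.1 hf with rfl | hf'
          · rfl
          · exfalso
            have := hv' f hf' v hvf
            rw [hT'] at this
            rcases hvab with rfl | rfl
            · exact (mem_erase.1 (mem_of_mem_erase this)).1 rfl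
            · exact (mem_erase.1 this).1 rfl
        · push_neg at hvab
          have hvT' : v ∈ T' := by
            rw [hT']; exact mem_erase.2 ⟨hvab.2, mem_erase.2 ⟨hvab.1, hvT⟩⟩
          obtain ⟨e, ⟨heM, hev⟩, hun⟩ := hu' v hvT'
          refine ⟨e, ⟨mem_insert_of_mem heM, hev⟩, ?_⟩
          rintro f ⟨hf, hvf⟩
          rcases mem_insert.1 hf with rfl | hf'
          · exfalso
            rcases Sym2.mem_iff.1 hvf with rfl | rfl
            · exact hvab.1 rfl
            · exact hvab.2 rfl
          · exact hun f ⟨hf', hvf⟩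
variable {n : ℕ}

lemma pmon_insert {T : Finset (Fin n)} {M : Finset (Sym2 (Fin n))} (a b : Fin n)
    (hab : a ≠ b) (ha : a ∉ T) (hb : b ∉ T) (hM : PMon T M) :
    PMon (insert a (insert b T)) (insert s(a,b) M) := by
  obtain ⟨hd, hv, hu⟩ := hM
  refine ⟨?_, ?_, ?_⟩
  · intro e he
    rcases mem_insert.1 he with rfl | he'
    · simp [Sym2.mk_isDiag_iff, hab]
    · exact hd e he'
  · intro e he v hve
    rcases mem_insert.1 he with rfl | he'
    · rcases Sym2.mem_iff.1 hve with rfl | rfl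
      · exact mem_insert_self _ _
      · exact mem_insert_of_mem (mem_insert_self _ _)
    · exact mem_insert_of_mem (mem_insert_of_mem (hv e he' v hve))
  · intro v hvT
    by_cases hvab : v = a ∨ v = b
    · refine ⟨s(a,b), ⟨mem_insert_self _ _, by rcases hvab with rfl | rfl <;> simp [Sym2.mem_iff]⟩, ?_⟩
      rintro f ⟨hf, hvf⟩
      rcases mem_insert.1 hf with rfl | hf'
      · rfl
      · exfalso
        have := hv f hf' v hvf
        rcases hvab with rfl | rfl
        · exact ha this
        · exact hb this
    · push_neg at hvab
      have hvT' : v ∈ T := by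
        rcases mem_insert.1 hvT with rfl | h
        · exact absurd rfl hvab.1
        · rcases mem_insert.1 h with rfl | h'
          · exact absurd rfl hvab.2
          · exact h'
      obtain ⟨e, ⟨heM, hev⟩, hun⟩ := hu v hvT'
      refine ⟨e, ⟨mem_insert_of_mem heM, hev⟩, ?_⟩
      rintro f ⟨hf, hvf⟩
      rcases mem_insert.1 hf with rfl | hf'
      · exfalso
        rcases Sym2.mem_iff.1 hvf with rfl | rfl
        · exact hvab.1 rfl
        · exact hvab.2 rfl
      · exact hun f ⟨hf', hvf⟩

lemma pmn_of_pmon {M : Finset (Sym2 (Fin n))} (hM : PMon univ M) : M ∈ PMn n :=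
  ⟨hM.1, fun v => hM.2.2 v (mem_univ v)⟩

lemma pmon_congr {T T' : Finset (Fin n)} {M : Finset (Sym2 (Fin n))} (h : T = T')
    (hM : PMon T M) : PMon T' M := h ▸ hM

lemma pm_contains_edge (hn : Even n) (h6 : 6 ≤ n) {g : Sym2 (Fin n)} (hg : ¬g.IsDiag) :
    ∃ M ∈ PMn n, g ∈ M := by
  induction g using Sym2.inductionOn with
  | _ x y =>
    rw [Sym2.mk_isDiag_iff] at hg
    set T := (univ.erase x).erase y with hT
    have hyx : y ∈ univ.erase x := mem_erase.2 ⟨fun h => hg h.symm, mem_univ _⟩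
    have hcT : T.card = n - 2 := by
      rw [hT, card_erase_of_mem hyx, card_erase_of_mem (mem_univ x), card_univ, Fintype.card_fin]
      omega
    have hxT : x ∉ T := fun h => (mem_erase.1 (mem_of_mem_erase h)).1 rfl
    have hyT : y ∉ T := fun h => (mem_erase.1 h).1 rfl
    obtain ⟨M', hM'⟩ := exists_pmon T (by rcases hn with ⟨k, hk⟩; rw [hcT]; exact ⟨k-1, by omega⟩)
    have h2 := pmon_insert x y hg hxT hyT hM'
    have huniv : insert x (insert y T) = univ := by
      ext v
      simp only [mem_insert, hT, mem_erase, mem_univ, iff_true]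
      by_cases h1 : v = x
      · left; exact h1
      · by_cases h2 : v = y
        · right; left; exact h2
        · right; right; exact ⟨h2, h1, trivial⟩
    exact ⟨_, pmn_of_pmon (pmon_congr huniv h2), mem_insert_self _ _⟩

lemma pm_contains_two (hn : Even n) (h6 : 6 ≤ n) {g h : Sym2 (Fin n)}
    (hg : ¬g.IsDiag) (hh : ¬h.IsDiag) (hdisj : ∀ v, v ∈ g → v ∉ h) :
    ∃ M ∈ PMn n, g ∈ M ∧ h ∈ M := by
  induction g using Sym2.inductionOn with
  | _ x y =>
    induction h using Sym2.inductionOn with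
    | _ c d =>
      rw [Sym2.mk_isDiag_iff] at hg hh
      have hxc : x ≠ c := fun h => (hdisj x (Sym2.mem_mk_left x y)) (h ▸ Sym2.mem_mk_left c d)
      have hxd : x ≠ d := fun h => (hdisj x (Sym2.mem_mk_left x y)) (h ▸ Sym2.mem_mk_right c d)
      have hyc : y ≠ c := fun h => (hdisj y (Sym2.mem_mk_right x y)) (h ▸ Sym2.mem_mk_left c d)
      have hyd : y ≠ d := fun h => (hdisj y (Sym2.mem_mk_right x y)) (h ▸ Sym2.mem_mk_right c d)
      set T := (((univ.erase x).erase y).erase c).erase d with hT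
      have hvT : ∀ v, v ∈ T ↔ (v ≠ d ∧ v ≠ c ∧ v ≠ y ∧ v ≠ x) := by
        intro v; rw [hT]; simp only [mem_erase, mem_univ, and_true]; try tauto
      have hcT : T.card = n - 4 := by
        have hdm : d ∈ ((univ.erase x).erase y).erase c :=
          mem_erase.2 ⟨fun h => hh h.symm, mem_erase.2 ⟨fun h => hyd h.symm,
            mem_erase.2 ⟨fun h => hxd h.symm, mem_univ _⟩⟩⟩
        have hcm : c ∈ (univ.erase x).erase y :=
          mem_erase.2 ⟨fun h => hyc h.symm, mem_erase.2 ⟨fun h => hxc h.symm, mem_univ _⟩⟩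
        have hym : y ∈ univ.erase x := mem_erase.2 ⟨fun h => hg h.symm, mem_univ _⟩
        rw [hT, card_erase_of_mem hdm, card_erase_of_mem hcm, card_erase_of_mem hym,
          card_erase_of_mem (mem_univ x), card_univ, Fintype.card_fin]
        omega
      obtain ⟨M', hM'⟩ := exists_pmon T (by rcases hn with ⟨k, hk⟩; rw [hcT]; exact ⟨k-2, by omega⟩)
      have h1 := pmon_insert c d hh (by rw [hvT]; tauto) (by rw [hvT]; tauto) hM'
      have h2 := pmon_insert x y hg
        (by simp only [mem_insert]; rw [hvT]; tauto)
        (by simp only [mem_insert]; rw [hvT]; tauto) h1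
      have huniv : insert x (insert y (insert c (insert d T))) = univ := by
        ext v
        simp only [mem_insert, mem_univ, iff_true]
        rw [hvT]
        tauto
      refine ⟨_, pmn_of_pmon (pmon_congr huniv h2), mem_insert_self _ _,
        mem_insert_of_mem (mem_insert_self _ _)⟩

noncomputable def PMFn (n : ℕ) : Finset (Finset (Sym2 (Fin n))) := univ.filter (· ∈ PMn n)

noncomputable def Ncnt (n : ℕ) (g : Sym2 (Fin n)) : Finset (Finset (Sym2 (Fin n))) :=
  (PMFn n).filter (fun M => g ∈ M)

lemma mem_PMFn {M : Finset (Sym2 (Fin n))} : M ∈ PMFn n ↔ M ∈ PMn n := by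
  simp [PMFn]

lemma pm_image_perm (σ : Equiv.Perm (Fin n)) {M : Finset (Sym2 (Fin n))} (hM : M ∈ PMn n) :
    M.image (Sym2.map σ) ∈ PMn n := by
  obtain ⟨hd, hu⟩ := hM
  constructor
  · intro e' he'
    obtain ⟨e, he, rfl⟩ := mem_image.1 he'
    induction e using Sym2.inductionOn with
    | _ x y =>
      rw [Sym2.map_pair_eq, Sym2.mk_isDiag_iff]
      intro h
      exact hd _ he (Sym2.mk_isDiag_iff.2 (σ.injective h))
  · intro v
    obtain ⟨e, ⟨heM, hev⟩, hun⟩ := hu (σ.symm v)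
    refine ⟨Sym2.map σ e, ⟨mem_image_of_mem _ heM, ?_⟩, ?_⟩
    · exact Sym2.mem_map.2 ⟨σ.symm v, hev, σ.apply_symm_apply v⟩
    · rintro f' ⟨hf', hvf'⟩
      obtain ⟨f, hf, rfl⟩ := mem_image.1 hf'
      obtain ⟨a, haf, hav⟩ := Sym2.mem_map.1 hvf'
      have : a = σ.symm v := by rw [← hav, Equiv.symm_apply_apply]
      subst this
      rw [hun f ⟨hf, haf⟩]

lemma ncnt_const {g h : Sym2 (Fin n)} (hg : ¬g.IsDiag) (hh : ¬h.IsDiag) :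
    (Ncnt n g).card = (Ncnt n h).card := by
  -- find σ mapping g to h
  obtain ⟨σ, hσ⟩ : ∃ σ : Equiv.Perm (Fin n), Sym2.map σ g = h := by
    induction g using Sym2.inductionOn with
    | _ a b =>
      induction h using Sym2.inductionOn with
      | _ c d =>
        rw [Sym2.mk_isDiag_iff] at hg hh
        set b' := (Equiv.swap a c) b with hb'
        refine ⟨(Equiv.swap a c).trans (Equiv.swap b' d), ?_⟩
        rw [Sym2.map_pair_eq]
        have h1 : ((Equiv.swap a c).trans (Equiv.swap b' d)) a = c := by
          simp only [Equiv.trans_apply]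
          rw [Equiv.swap_apply_left]
          apply Equiv.swap_apply_of_ne_of_ne
          · intro h; apply hg; apply (Equiv.swap a c).injective
            rw [← hb', h, Equiv.swap_apply_left]
          · exact hh
        have h2 : ((Equiv.swap a c).trans (Equiv.swap b' d)) b = d := by
          simp only [Equiv.trans_apply, ← hb', Equiv.swap_apply_left]
        rw [h1, h2]
  apply Finset.card_bij (fun M _ => M.image (Sym2.map σ))
  · intro M hM
    simp only [Ncnt, mem_filter, mem_PMFn] at hM ⊢
    exact ⟨pm_image_perm σ hM.1, hσ ▸ mem_image_of_mem _ hM.2⟩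
  · intro M₁ h₁ M₂ h₂ heq
    exact Finset.image_injective (Sym2.map.injective σ.injective) heq
  · intro M' hM'
    simp only [Ncnt, mem_filter, mem_PMFn] at hM'
    refine ⟨M'.image (Sym2.map σ.symm), ?_, ?_⟩
    · simp only [Ncnt, mem_filter, mem_PMFn]
      refine ⟨pm_image_perm σ.symm hM'.1, ?_⟩
      have : Sym2.map σ.symm h = g := by
        rw [← hσ, Sym2.map_map]
        simp [Sym2.map_id']
      exact this ▸ mem_image_of_mem _ hM'.2
    · rw [Finset.image_image]
      have : (Sym2.map σ) ∘ (Sym2.map σ.symm) = id := by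
        funext z
        rw [Function.comp_apply, Sym2.map_map]
        simp [Sym2.map_id']
      rw [this, Finset.image_id]

lemma ncnt_diag {g : Sym2 (Fin n)} (hg : g.IsDiag) : (Ncnt n g).card = 0 := by
  rw [Finset.card_eq_zero, Finset.eq_empty_iff_forall_notMem]
  intro M hM
  simp only [Ncnt, mem_filter, mem_PMFn] at hM
  exact hM.1.1 g hM.2 hg

noncomputable def EdgesND (n : ℕ) : Finset (Sym2 (Fin n)) := univ.filter (fun g => ¬g.IsDiag)

lemma edgesND_card (hn : Even n) : (EdgesND n).card = (n/2) * (n-1) := by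
  have h1 : (EdgesND n).card = Fintype.card {g : Sym2 (Fin n) // ¬g.IsDiag} := by
    rw [Fintype.card_subtype]; rfl
  rw [h1, Sym2.card_subtype_not_diag, Fintype.card_fin, Nat.choose_two_right]
  obtain ⟨m, rfl⟩ := hn
  have h2 : m + m = 2 * m := by omega
  rw [h2, mul_assoc, Nat.mul_div_cancel_left _ (by norm_num : 0 < 2),
    Nat.mul_div_cancel_left _ (by norm_num : 0 < 2)]

lemma sum_ncnt (hn : Even n) :
    ∑ g ∈ EdgesND n, (Ncnt n g).card = (n/2) * (PMFn n).card := by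
  have step1 : ∑ g ∈ EdgesND n, (Ncnt n g).card
      = ∑ M ∈ PMFn n, ((EdgesND n).filter (fun g => g ∈ M)).card := by
    simp only [Ncnt, Finset.card_filter]
    exact Finset.sum_comm
  rw [step1]
  have step2 : ∀ M ∈ PMFn n, ((EdgesND n).filter (fun g => g ∈ M)).card = n / 2 := by
    intro M hM
    have hMpm := mem_PMFn.1 hM
    have : (EdgesND n).filter (fun g => g ∈ M) = M := by
      ext g
      simp only [mem_filter, EdgesND, mem_univ, true_and]
      exact ⟨fun h => h.2, fun h => ⟨hMpm.1 g h, h⟩⟩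
    rw [this, pm_card hn hMpm]
  rw [Finset.sum_congr rfl step2, Finset.sum_const, smul_eq_mul, mul_comm]

lemma ncnt_mul (hn : Even n) (h6 : 6 ≤ n) {g : Sym2 (Fin n)} (hg : ¬g.IsDiag) :
    (n - 1) * (Ncnt n g).card = (PMFn n).card := by
  have hsum : ∑ h ∈ EdgesND n, (Ncnt n h).card = (EdgesND n).card * (Ncnt n g).card := by
    rw [Finset.sum_congr rfl (fun h hh => ncnt_const (by
      simpa [EdgesND] using hh) hg), Finset.sum_const, smul_eq_mul]
  rw [sum_ncnt hn, edgesND_card hn] at hsum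
  have hpos : 0 < n / 2 := by omega
  apply Nat.eq_of_mul_eq_mul_left hpos
  rw [← mul_assoc]
  exact hsum.symm

lemma ncnt_pos (hn : Even n) (h6 : 6 ≤ n) {g : Sym2 (Fin n)} (hg : ¬g.IsDiag) :
    0 < (Ncnt n g).card := by
  obtain ⟨M, hM, hgM⟩ := pm_contains_edge hn h6 hg
  exact Finset.card_pos.2 ⟨M, by simp only [Ncnt, mem_filter, mem_PMFn]; exact ⟨hM, hgM⟩⟩

lemma cover_subset_biUnion {c : Finset (Sym2 (Fin n))} (hc : IsCoverH (PMn n) c) :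
    PMFn n ⊆ c.biUnion (Ncnt n) := by
  intro M hM
  obtain ⟨g, hg⟩ := hc M (mem_PMFn.1 hM)
  rw [mem_inter] at hg
  exact mem_biUnion.2 ⟨g, hg.1, by simp only [Ncnt, mem_filter]; exact ⟨hM, hg.2⟩⟩

lemma exists_nondiag (h6 : 6 ≤ n) : ∃ g : Sym2 (Fin n), ¬g.IsDiag := by
  refine ⟨s(⟨0, by omega⟩, ⟨1, by omega⟩), ?_⟩
  rw [Sym2.mk_isDiag_iff]
  intro h
  exact absurd (congrArg Fin.val h) (by simp)

lemma ncnt_le (hn : Even n) (h6 : 6 ≤ n) {g₀ : Sym2 (Fin n)} (hg₀ : ¬g₀.IsDiag)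
    (g : Sym2 (Fin n)) : (Ncnt n g).card ≤ (Ncnt n g₀).card := by
  by_cases hg : g.IsDiag
  · rw [ncnt_diag hg]; omega
  · rw [ncnt_const hg hg₀]

lemma cover_ge (hn : Even n) (h6 : 6 ≤ n) {c : Finset (Sym2 (Fin n))}
    (hc : IsCoverH (PMn n) c) : n - 1 ≤ c.card := by
  by_contra hlt
  push_neg at hlt
  obtain ⟨g₀, hg₀⟩ := exists_nondiag (n := n) h6
  set p := (Ncnt n g₀).card with hp
  have h1 : (PMFn n).card ≤ ∑ g ∈ c, (Ncnt n g).card :=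
    le_trans (card_le_card (cover_subset_biUnion hc)) (card_biUnion_le)
  have h2 : ∑ g ∈ c, (Ncnt n g).card ≤ c.card * p := by
    calc ∑ g ∈ c, (Ncnt n g).card ≤ ∑ _g ∈ c, p :=
          Finset.sum_le_sum (fun g _ => ncnt_le hn h6 hg₀ g)
      _ = c.card * p := by rw [Finset.sum_const, smul_eq_mul]
  have h3 : (n-1) * p = (PMFn n).card := ncnt_mul hn h6 hg₀
  have h4 : 0 < p := ncnt_pos hn h6 hg₀
  have h5 : c.card * p < (n-1) * p := by
    apply Nat.mul_lt_mul_of_lt_of_le (by omega) (le_refl p) h4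
  omega

lemma cover_card_nondiag (hn : Even n) (h6 : 6 ≤ n) {c : Finset (Sym2 (Fin n))}
    (hc : IsCoverH (PMn n) c) (hcard : c.card = n - 1) :
    ∀ g ∈ c, ¬g.IsDiag := by
  intro g hgc hgd
  obtain ⟨g₀, hg₀⟩ := exists_nondiag (n := n) h6
  set p := (Ncnt n g₀).card with hp
  have h1 : (PMFn n).card ≤ ∑ k ∈ c, (Ncnt n k).card :=
    le_trans (card_le_card (cover_subset_biUnion hc)) (card_biUnion_le)
  have h2 : ∑ k ∈ c, (Ncnt n k).card = ∑ k ∈ c.erase g, (Ncnt n k).card + (Ncnt n g).card :=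
    (Finset.sum_erase_add c _ hgc).symm
  have h3 : ∑ k ∈ c.erase g, (Ncnt n k).card ≤ (n - 2) * p := by
    calc ∑ k ∈ c.erase g, (Ncnt n k).card ≤ ∑ _k ∈ c.erase g, p :=
          Finset.sum_le_sum (fun k _ => ncnt_le hn h6 hg₀ k)
      _ = (c.erase g).card * p := by rw [Finset.sum_const, smul_eq_mul]
      _ = (n - 2) * p := by rw [card_erase_of_mem hgc, hcard]; congr 1
  have h4 : (Ncnt n g).card = 0 := ncnt_diag hgd
  have h5 : (n-1) * p = (PMFn n).card := ncnt_mul hn h6 hg₀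
  have h6' : 0 < p := ncnt_pos hn h6 hg₀
  have h7 : (n-2) * p < (n-1)*p := Nat.mul_lt_mul_of_lt_of_le (by omega) (le_refl p) h6'
  omega

lemma cover_card_intersecting (hn : Even n) (h6 : 6 ≤ n) {c : Finset (Sym2 (Fin n))}
    (hc : IsCoverH (PMn n) c) (hcard : c.card = n - 1) :
    ∀ g ∈ c, ∀ h ∈ c, ∃ v, v ∈ g ∧ v ∈ h := by
  intro g hgc h hhc
  have hgnd := cover_card_nondiag hn h6 hc hcard g hgc
  have hhnd := cover_card_nondiag hn h6 hc hcard h hhc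
  by_cases hgh : g = h
  · subst hgh
    induction g using Sym2.inductionOn with
    | _ x y => exact ⟨x, Sym2.mem_mk_left x y, Sym2.mem_mk_left x y⟩
  by_contra hdisj
  push_neg at hdisj
  have hdisj' : ∀ v, v ∈ g → v ∉ h := fun v hv hvh => (hdisj v hv) hvh
  obtain ⟨M, hMpm, hgM, hhM⟩ := pm_contains_two hn h6 hgnd hhnd hdisj'
  obtain ⟨g₀, hg₀⟩ := exists_nondiag (n := n) h6
  set p := (Ncnt n g₀).card with hp
  set c' := (c.erase g).erase h with hc'
  have hcsub : PMFn n ⊆ (Ncnt n g ∪ Ncnt n h) ∪ c'.biUnion (Ncnt n) := by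
    intro M' hM'
    obtain ⟨k, hk⟩ := hc M' (mem_PMFn.1 hM')
    rw [mem_inter] at hk
    have hkN : M' ∈ Ncnt n k := by simp only [Ncnt, mem_filter]; exact ⟨hM', hk.2⟩
    by_cases h1 : k = g
    · exact mem_union_left _ (mem_union_left _ (h1 ▸ hkN))
    by_cases h2 : k = h
    · exact mem_union_left _ (mem_union_right _ (h2 ▸ hkN))
    · exact mem_union_right _ (mem_biUnion.2 ⟨k, mem_erase.2 ⟨h2, mem_erase.2 ⟨h1, hk.1⟩⟩, hkN⟩)
  have hq : 0 < (Ncnt n g ∩ Ncnt n h).card := by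
    apply Finset.card_pos.2
    refine ⟨M, ?_⟩
    simp only [mem_inter, Ncnt, mem_filter, mem_PMFn]
    exact ⟨⟨hMpm, hgM⟩, ⟨hMpm, hhM⟩⟩
  have hunion : (Ncnt n g ∪ Ncnt n h).card + (Ncnt n g ∩ Ncnt n h).card
      = (Ncnt n g).card + (Ncnt n h).card := Finset.card_union_add_card_inter _ _
  have hcg : (Ncnt n g).card = p := ncnt_const hgnd hg₀
  have hch : (Ncnt n h).card = p := ncnt_const hhnd hg₀
  have hc'card : c'.card = n - 3 := by
    rw [hc', card_erase_of_mem (mem_erase.2 ⟨fun he => hgh he.symm, hhc⟩),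
      card_erase_of_mem hgc, hcard]
    omega
  have hbi : (c'.biUnion (Ncnt n)).card ≤ (n-3) * p := by
    calc (c'.biUnion (Ncnt n)).card ≤ ∑ k ∈ c', (Ncnt n k).card := card_biUnion_le
      _ ≤ ∑ _k ∈ c', p := Finset.sum_le_sum (fun k _ => ncnt_le hn h6 hg₀ k)
      _ = (n-3) * p := by rw [Finset.sum_const, smul_eq_mul, hc'card]
  have htot : (PMFn n).card ≤ (Ncnt n g ∪ Ncnt n h).card + (n-3)*p :=
    le_trans (card_le_card hcsub) (le_trans (card_union_le _ _) (by omega))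
  have h5 : (n-1) * p = (PMFn n).card := ncnt_mul hn h6 hg₀
  have hsplit : (n-1) * p = (n-3) * p + 2 * p := by
    rw [← Nat.add_mul]; congr 1; omega
  omega

lemma intersecting_star (h6 : 6 ≤ n) {c : Finset (Sym2 (Fin n))}
    (hcard : c.card = n - 1) (hnd : ∀ g ∈ c, ¬g.IsDiag)
    (hint : ∀ g ∈ c, ∀ h ∈ c, ∃ v, v ∈ g ∧ v ∈ h) :
    ∃ v : Fin n, ∀ g ∈ c, v ∈ g := by
  have hcne : c.Nonempty := Finset.card_pos.1 (by omega)
  obtain ⟨g₀, hg₀c⟩ := hcne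
  obtain ⟨a, b, rfl⟩ : ∃ a b, g₀ = s(a, b) := by
    obtain ⟨a, b, h⟩ := Sym2.exists.mp ⟨g₀, (rfl : g₀ = g₀)⟩
    exact ⟨a, b, h⟩
  have hab : a ≠ b := fun h => hnd _ hg₀c (Sym2.mk_isDiag_iff.2 h)
  by_cases hA : ∀ g ∈ c, a ∈ g
  · exact ⟨a, hA⟩
  by_cases hB : ∀ g ∈ c, b ∈ g
  · exact ⟨b, hB⟩
  exfalso
  push_neg at hA hB
  obtain ⟨e, hec, hae⟩ := hA
  obtain ⟨f, hfc, hbf⟩ := hB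
  -- e contains b, f contains a
  have hbe : b ∈ e := by
    obtain ⟨v, hv1, hv2⟩ := hint _ hg₀c _ hec
    rcases Sym2.mem_iff.1 hv1 with rfl | rfl
    · exact absurd hv2 hae
    · exact hv2
  have haf : a ∈ f := by
    obtain ⟨v, hv1, hv2⟩ := hint _ hg₀c _ hfc
    rcases Sym2.mem_iff.1 hv1 with rfl | rfl
    · exact hv2
    · exact absurd hv2 hbf
  obtain ⟨x, rfl⟩ := Sym2.mem_iff_exists.1 hbe
  obtain ⟨y, rfl⟩ := Sym2.mem_iff_exists.1 haf
  have hxa : x ≠ a := fun h => hae (h ▸ Sym2.mem_mk_right b x)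
  have hxb : x ≠ b := fun h => hnd _ hec (Sym2.mk_isDiag_iff.2 h.symm)
  have hyb : y ≠ b := fun h => hbf (h ▸ Sym2.mem_mk_right a y)
  have hya : y ≠ a := fun h => hnd _ hfc (Sym2.mk_isDiag_iff.2 h.symm)
  -- common vertex of e and f forces x = y
  have hxy : x = y := by
    obtain ⟨v, hv1, hv2⟩ := hint _ hec _ hfc
    rcases Sym2.mem_iff.1 hv1 with rfl | rfl
    · rcases Sym2.mem_iff.1 hv2 with h' | h'
      · exact absurd h' (fun h => hab h.symm)
      · exact absurd h'.symm hyb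
    · rcases Sym2.mem_iff.1 hv2 with h' | h'
      · exact absurd h' hxa
      · exact h'
  subst hxy
  -- a fourth edge
  have hnsub : ¬ c ⊆ {s(a,b), s(b,x), s(a,x)} := by
    intro hsub
    have h1 := card_le_card hsub
    have h2 : ({s(a,b), s(b,x), s(a,x)} : Finset (Sym2 (Fin n))).card ≤ 3 :=
      le_trans (card_insert_le _ _) (by
        have := card_insert_le s(b,x) ({s(a,x)} : Finset (Sym2 (Fin n)))
        simp only [card_singleton] at this ⊢
        omega)
    omega
  obtain ⟨k, hkc, hknot⟩ := Finset.not_subset.1 hnsub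
  simp only [mem_insert, mem_singleton, not_or] at hknot
  obtain ⟨hk1, hk2, hk3⟩ := hknot
  -- k meets s(a,b)
  obtain ⟨v, hv1, hv2⟩ := hint _ hkc _ hg₀c
  rcases Sym2.mem_iff.1 hv2 with rfl | rfl
  · -- v = a ∈ k, so k = s(a,z)
    obtain ⟨z, rfl⟩ := Sym2.mem_iff_exists.1 hv1
    obtain ⟨w, hw1, hw2⟩ := hint _ hkc _ hec
    rcases Sym2.mem_iff.1 hw1 with rfl | rfl
    · rcases Sym2.mem_iff.1 hw2 with h' | h'
      · exact hab h'
      · exact hxa h'.symm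
    · rcases Sym2.mem_iff.1 hw2 with h' | h'
      · exact hk1 (by rw [h'])
      · exact hk3 (by rw [h'])
  · -- v = b ∈ k
    obtain ⟨z, rfl⟩ := Sym2.mem_iff_exists.1 hv1
    obtain ⟨w, hw1, hw2⟩ := hint _ hkc _ hfc
    rcases Sym2.mem_iff.1 hw1 with rfl | rfl
    · rcases Sym2.mem_iff.1 hw2 with h' | h'
      · exact hab h'.symm
      · exact hxb h'.symm
    · rcases Sym2.mem_iff.1 hw2 with h' | h'
      · exact hk1 (by rw [h', Sym2.eq_swap])
      · exact hk2 (by rw [h'])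

lemma verts_card_le (e : Sym2 (Fin n)) : (univ.filter (fun v => v ∈ e)).card ≤ 2 := by
  induction e using Sym2.inductionOn with
  | _ x y =>
    have hsub : (univ.filter (fun v => v ∈ s(x,y))) ⊆ {x, y} := by
      intro v hv
      simp only [mem_filter, Sym2.mem_iff] at hv
      simp only [mem_insert, mem_singleton]
      exact hv.2
    exact le_trans (card_le_card hsub) (le_trans (card_insert_le _ _) (by simp))

lemma st_cover_choice {c : Finset (Sym2 (Fin n))} (hc : IsCoverH (STn n) c) (v : Fin n) :
    ∃ e, e ∈ c ∧ v ∈ e ∧ ¬e.IsDiag := by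
  obtain ⟨e, he⟩ := hc (univ.filter (fun e : Sym2 (Fin n) => v ∈ e ∧ ¬ e.IsDiag)) ⟨v, rfl⟩
  rw [mem_inter, mem_filter] at he
  exact ⟨e, he.1, he.2.2⟩

lemma st_cover_count {c : Finset (Sym2 (Fin n))} (hc : IsCoverH (STn n) c) :
    n = ∑ e ∈ c, (univ.filter (fun v => (st_cover_choice hc v).choose = e)).card := by
  have := card_eq_sum_card_fiberwise
    (f := fun v : Fin n => (st_cover_choice hc v).choose) (s := univ) (t := c)
    (fun v _ => ((st_cover_choice hc v).choose_spec).1)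
  rwa [card_univ, Fintype.card_fin] at this

lemma st_cover_fiber_le {c : Finset (Sym2 (Fin n))} (hc : IsCoverH (STn n) c)
    (e : Sym2 (Fin n)) :
    (univ.filter (fun v => (st_cover_choice hc v).choose = e)).card ≤ 2 := by
  refine le_trans (card_le_card ?_) (verts_card_le e)
  intro v hv
  rw [mem_filter] at hv ⊢
  exact ⟨mem_univ v, hv.2 ▸ ((st_cover_choice hc v).choose_spec).2.1⟩

lemma st_cover_ge (hn : Even n) {c : Finset (Sym2 (Fin n))}
    (hc : IsCoverH (STn n) c) : n / 2 ≤ c.card := by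
  have h1 := st_cover_count hc
  have h2 : ∑ e ∈ c, (univ.filter (fun v => (st_cover_choice hc v).choose = e)).card
      ≤ ∑ _e ∈ c, 2 := Finset.sum_le_sum (fun e _ => st_cover_fiber_le hc e)
  rw [Finset.sum_const, smul_eq_mul] at h2
  omega

lemma st_cover_eq_pm (hn : Even n) {c : Finset (Sym2 (Fin n))}
    (hc : IsCoverH (STn n) c) (hcard : c.card = n / 2) : c ∈ PMn n := by
  set f : Fin n → Sym2 (Fin n) := fun v => (st_cover_choice hc v).choose with hf
  have hfspec : ∀ v, f v ∈ c ∧ v ∈ f v ∧ ¬(f v).IsDiag :=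
    fun v => (st_cover_choice hc v).choose_spec
  have hfib : ∀ e ∈ c, (univ.filter (fun v => f v = e)).card = 2 := by
    by_contra hcon
    push_neg at hcon
    obtain ⟨e₀, he₀c, he₀⟩ := hcon
    have hlt : ∑ e ∈ c, (univ.filter (fun v => f v = e)).card < ∑ _e ∈ c, 2 := by
      apply Finset.sum_lt_sum (fun e _ => st_cover_fiber_le hc e)
      exact ⟨e₀, he₀c, lt_of_le_of_ne (st_cover_fiber_le hc e₀) he₀⟩
    rw [Finset.sum_const, smul_eq_mul, hcard] at hlt
    have hcount : n = ∑ e ∈ c, (univ.filter (fun v => f v = e)).card := st_cover_count hc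
    omega
  -- every edge of c is some f v, and fiber = vertex set
  have hfib_eq : ∀ e ∈ c, (univ.filter (fun v => f v = e)) = (univ.filter (fun v => v ∈ e)) := by
    intro e hec
    apply Finset.eq_of_subset_of_card_le
    · intro v hv
      rw [mem_filter] at hv ⊢
      exact ⟨mem_univ v, hv.2 ▸ (hfspec v).2.1⟩
    · rw [hfib e hec]
      exact verts_card_le e
  constructor
  · intro e hec
    have h2 := hfib e hec
    obtain ⟨v, hv⟩ := Finset.card_pos.1 (by rw [h2]; omega)
    rw [mem_filter] at hv
    exact hv.2 ▸ (hfspec v).2.2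
  · intro v
    refine ⟨f v, ⟨(hfspec v).1, (hfspec v).2.1⟩, ?_⟩
    rintro e ⟨hec, hve⟩
    have h3 : v ∈ univ.filter (fun w => f w = e) := by
      rw [hfib_eq e hec, mem_filter]
      exact ⟨mem_univ v, hve⟩
    rw [mem_filter] at h3
    exact h3.2.symm

end Stmt16Aux

set_option maxHeartbeats 2000000 in
/-- for even `n ≥ 6`, `(PM(K_n), ST(K_n))` is an `(n/2, n-1)`-loom. -/
theorem stmt16 (n : ℕ) (hn : Even n) (h6 : 6 ≤ n) :
    IsLoom (n / 2) (n - 1) (PMn n) (STn n) := by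
  have hpm_cover_st : ∀ M ∈ PMn n, IsCoverH (STn n) M := by
    rintro M hM S ⟨v, rfl⟩
    rw [inter_comm] at *
    have h1 := orth_pm_st hM v
    rw [inter_comm] at h1
    exact Finset.card_pos.1 (by omega)
  have hst_cover_pm : ∀ v : Fin n, IsCoverH (PMn n)
      (Finset.univ.filter (fun e : Sym2 (Fin n) => v ∈ e ∧ ¬ e.IsDiag)) := by
    intro v M hM
    rw [inter_comm]
    have h1 := orth_pm_st hM v
    exact Finset.card_pos.1 (by omega)
  refine ⟨by omega, by omega, ?_, ?_, ?_, ?_, ?_, ?_, ?_⟩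
  · -- OrthH
    rintro M hM S ⟨v, rfl⟩
    exact orth_pm_st hM v
  · -- UniformH PM
    exact fun M hM => pm_card hn hM
  · -- UniformH ST
    rintro S ⟨v, rfl⟩
    exact star_card v
  · -- CoverNumIs (PMn n) (n-1)
    constructor
    · exact ⟨Finset.univ.filter (fun e : Sym2 (Fin n) => (⟨0, by omega⟩ : Fin n) ∈ e ∧ ¬ e.IsDiag),
        hst_cover_pm _, star_card _⟩
    · exact fun c hc => cover_ge hn h6 hc
  · -- CoverNumIs (STn n) (n/2)
    constructor
    · obtain ⟨M, hM⟩ := exists_pmon (univ : Finset (Fin n))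
        (by rw [card_univ, Fintype.card_fin]; exact hn)
      have hMpm : M ∈ PMn n := pmn_of_pmon hM
      exact ⟨M, hpm_cover_st M hMpm, pm_card hn hMpm⟩
    · exact fun c hc => st_cover_ge hn hc
  · -- PMn = Ck (STn) (n/2)
    ext M
    constructor
    · intro hM
      exact ⟨pm_card hn hM, hpm_cover_st M hM⟩
    · rintro ⟨hcard, hcov⟩
      exact st_cover_eq_pm hn hcov hcard
  · -- STn = Ck (PMn) (n-1)
    ext c
    constructor
    · rintro ⟨v, rfl⟩
      exact ⟨star_card v, hst_cover_pm v⟩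
    · rintro ⟨hcard, hcov⟩
      have hnd := cover_card_nondiag hn h6 hcov hcard
      have hint := cover_card_intersecting hn h6 hcov hcard
      obtain ⟨v, hv⟩ := intersecting_star h6 hcard hnd hint
      refine ⟨v, ?_⟩
      apply Finset.eq_of_subset_of_card_le
      · intro g hg
        exact mem_filter.2 ⟨mem_univ g, hv g hg, hnd g hg⟩
      · rw [star_card v, hcard]
end
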